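/- For any ploidy profile m on a finite set X, and for any edit distance D on the set of multiple-labelled trees realizing m such that the graph whose vertices are these trees, with an edge between any two trees at D-distance 1, is connected, the ploidy profile space P(m) is a connected graph. -/

import Mathlib

/-!
Formalization preamble for "Autopolyploidy, allopolyploidy, and phylogenetic
networks with horizontal arcs" (Huber & Maher).

Networks are finite directed multigraphs whose vertices and arcs are (finitely
many) natural numbers; parallel arcs (beads) are allowed, loops are not.
-/

namespace Ploidy

/-- A finite directed multigraph: both vertex names and arc identifiers are
natural numbers; `src`/`tgt` give the endpoints of each arc. -/
structure Net where
  verts : Finset ℕ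
  arcs : Finset ℕ
  src : ℕ → ℕ
  tgt : ℕ → ℕ

/-- The indegree of a vertex. -/
def inDeg (G : Net) (v : ℕ) : ℕ := (G.arcs.filter fun a => G.tgt a = v).card

/-- The outdegree of a vertex. -/
def outDeg (G : Net) (v : ℕ) : ℕ := (G.arcs.filter fun a => G.src a = v).card

def IsLeafN (G : Net) (v : ℕ) : Prop := v ∈ G.verts ∧ inDeg G v = 1 ∧ outDeg G v = 0
def IsTreeVert (G : Net) (v : ℕ) : Prop := v ∈ G.verts ∧ inDeg G v = 1 ∧ outDeg G v = 2
def IsReticN (G : Net) (v : ℕ) : Prop := v ∈ G.verts ∧ inDeg G v = 2 ∧ outDeg G v = 1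
def IsRootN (G : Net) (v : ℕ) : Prop := v ∈ G.verts ∧ inDeg G v = 0

instance (G : Net) (v : ℕ) : Decidable (IsLeafN G v) :=
  decidable_of_iff (v ∈ G.verts ∧ inDeg G v = 1 ∧ outDeg G v = 0) Iff.rfl

/-- `IsWalk G l u v`: the list of arcs `l` forms a directed walk from `u` to `v`. -/
def IsWalk (G : Net) : List ℕ → ℕ → ℕ → Prop
  | [], u, v => u = v ∧ u ∈ G.verts
  | a :: l, u, v => a ∈ G.arcs ∧ G.src a = u ∧ IsWalk G l (G.tgt a) v

/-- The number of directed paths from `u` to `v` (in a DAG every directed walk is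
a path, and there are finitely many of them). -/
noncomputable def nPaths (G : Net) (u v : ℕ) : ℕ := Set.ncard {l : List ℕ | IsWalk G l u v}

/-- `a` is an arc from `u` to `v`. -/
def ArcFT (G : Net) (a u v : ℕ) : Prop := a ∈ G.arcs ∧ G.src a = u ∧ G.tgt a = v

/-- `u` is a parent of `v`. -/
def IsParent (G : Net) (u v : ℕ) : Prop := ∃ a, ArcFT G a u v

/-- `w` is below `u` (reachable from `u` by a directed walk, possibly `u = w`). -/
def BelowV (G : Net) (u w : ℕ) : Prop := ∃ l, IsWalk G l u w

/-- `v` is an end vertex of a pair of parallel arcs (a bead). -/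
def InBead (G : Net) (v : ℕ) : Prop :=
  ∃ a b, a ∈ G.arcs ∧ b ∈ G.arcs ∧ a ≠ b ∧ G.src a = G.src b ∧ G.tgt a = G.tgt b ∧
    (G.src a = v ∨ G.tgt a = v)

/-- `G` is beadless: there is no pair of parallel arcs. -/
def Beadless (G : Net) : Prop := ∀ v, ¬ InBead G v

/-- `G` is a (rooted, binary) phylogenetic network in the sense of Huber–Maher:
a rooted DAG, possibly with beads but without loops, with a unique root of
indegree 0 and outdegree 2, all of whose other vertices are leaves, tree
vertices or reticulation vertices. -/
structure IsPhylo (G : Net) : Prop where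
  src_mem : ∀ a ∈ G.arcs, G.src a ∈ G.verts
  tgt_mem : ∀ a ∈ G.arcs, G.tgt a ∈ G.verts
  no_loop : ∀ a ∈ G.arcs, G.src a ≠ G.tgt a
  acyclic : ∀ (v : ℕ) (l : List ℕ), l ≠ [] → ¬ IsWalk G l v v
  root_exu : ∃! r, IsRootN G r
  root_out : ∀ r, IsRootN G r → outDeg G r = 2
  types : ∀ v ∈ G.verts, IsRootN G v ∨ IsLeafN G v ∨ IsTreeVert G v ∨ IsReticN G v

/-- An HGT-consistent labelling: (P1), (P2) and (P3) (the latter required only for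
reticulation vertices not contained in beads). -/
def IsHGT (G : Net) (t : ℕ → ℝ) : Prop :=
  (∀ v ∈ G.verts, 0 ≤ t v) ∧
  (∀ a ∈ G.arcs,
      (IsReticN G (G.tgt a) → t (G.src a) ≤ t (G.tgt a)) ∧
      (¬ IsReticN G (G.tgt a) → t (G.src a) < t (G.tgt a))) ∧
  (∀ u ∈ G.verts, ¬ IsLeafN G u → ∃ v, IsParent G u v ∧ t u < t v) ∧
  (∀ v, IsReticN G v → ¬ InBead G v → ∃! u, IsParent G u v ∧ t u = t v)

/-- `v` is a reticulation vertex (not contained in a bead) violating (P3). -/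
def ViolatesP3 (G : Net) (t : ℕ → ℝ) (v : ℕ) : Prop :=
  IsReticN G v ∧ ¬ InBead G v ∧ ¬ (∃! u, IsParent G u v ∧ t u = t v)

/-- A weak HGT-consistent labelling: (P1), (P2) and (P3'): at most one reticulation
vertex `v`, with distinct parents `u₁, u₂` such that `u₂` is below `u₁` and
`t u₁ ≠ t v ≠ t u₂`, violates (P3). -/
def IsWeakHGT (G : Net) (t : ℕ → ℝ) : Prop :=
  (∀ v ∈ G.verts, 0 ≤ t v) ∧
  (∀ a ∈ G.arcs,
      (IsReticN G (G.tgt a) → t (G.src a) ≤ t (G.tgt a)) ∧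
      (¬ IsReticN G (G.tgt a) → t (G.src a) < t (G.tgt a))) ∧
  (∀ u ∈ G.verts, ¬ IsLeafN G u → ∃ v, IsParent G u v ∧ t u < t v) ∧
  (∀ v w, ViolatesP3 G t v → ViolatesP3 G t w → v = w) ∧
  (∀ v, ViolatesP3 G t v →
      ∃ u1 u2, u1 ≠ u2 ∧ IsParent G u1 v ∧ IsParent G u2 v ∧ BelowV G u1 u2 ∧
        t u1 ≠ t v ∧ t u2 ≠ t v)

/-! ### Ploidy profiles and the simplification sequence -/

/-- A ploidy profile: a nonempty descending list of positive integers; the entry at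
(0-based) position `i` is indexed by the taxon `x_{i+1}`. -/
def IsProfileL (l : List ℕ) : Prop := l ≠ [] ∧ l.Pairwise (· ≥ ·) ∧ ∀ x ∈ l, 1 ≤ x

/-- A simple ploidy profile: first component at least 2, all other components 1. -/
def IsSimpleP (l : List ℕ) : Prop := l ≠ [] ∧ 2 ≤ l.headI ∧ ∀ x ∈ l.tail, x = 1

/-- A strictly simple ploidy profile. -/
def IsStrictlySimpleP (l : List ℕ) : Prop := IsSimpleP l ∧ l.length = 1

/-- Insert `x` into a descending list, directly after the last occurrence of the
value `x` (i.e. after all entries `≥ x`). -/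
def insertDesc (x : ℕ) : List ℕ → List ℕ
  | [] => [x]
  | y :: ys => if x ≤ y then y :: insertDesc x ys else x :: y :: ys

/-- One step of the simplification process for ploidy profiles; simple profiles are
fixed points.  With `α = m₁ - m₂`: if `α = 0` delete `m₁`; if `α > m₂` replace `m₁`
by `α`; if `0 < α ≤ m₂` delete `m₁` and insert `α` directly after the last
occurrence of the value `α`. -/
def simpStep (l : List ℕ) : List ℕ :=
  if 2 ≤ l.headI ∧ ∀ x ∈ l.tail, x = 1 then l
  else
    match l with
    | m1 :: m2 :: rest =>
        if m1 = m2 then m2 :: rest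
        else if m2 < m1 - m2 then (m1 - m2) :: m2 :: rest
        else insertDesc (m1 - m2) (m2 :: rest)
    | _ => l

/-- `mt` is the (simple) terminal element of the simplification sequence of `m`. -/
def IsTerminal (m mt : List ℕ) : Prop := IsSimpleP mt ∧ ∃ k, simpStep^[k] m = mt

/-- A practical ploidy profile: simple but not strictly simple, or `(2^l)`, `l ≥ 1`. -/
def Practical (l : List ℕ) : Prop :=
  (IsSimpleP l ∧ 2 ≤ l.length) ∨ (l.length = 1 ∧ ∃ j, 1 ≤ j ∧ l.headI = 2 ^ j)

/-- An arc-rich (strictly simple) ploidy profile: the binary representation of its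
single component has dimension at least two. -/
def ArcRich (l : List ℕ) : Prop :=
  l.length = 1 ∧ 2 ≤ l.headI ∧ 2 ≤ (Nat.bits l.headI).count true

/-! ### Realizations of ploidy profiles -/

/-- A network together with an indexing of its leaves by the positions of a
ploidy profile. -/
structure LNet where
  net : Net
  leaf : ℕ → ℕ

/-- `R` is a phylogenetic network realizing the ploidy profile `m`: the leaves of
`R.net` are bijectively indexed by the positions of `m` and, for every `i`, the
number of directed paths from the root to the leaf `R.leaf i` is the `i`-th
component of `m`. -/
def RealizesL (R : LNet) (m : List ℕ) : Prop :=
  IsPhylo R.net ∧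
  (∀ i < m.length, IsLeafN R.net (R.leaf i)) ∧
  (∀ i j, i < m.length → j < m.length → R.leaf i = R.leaf j → i = j) ∧
  (∀ v, IsLeafN R.net v → ∃ i < m.length, R.leaf i = v) ∧
  (∀ i < m.length, ∀ r, IsRootN R.net r → nPaths R.net r (R.leaf i) = m.getD i 0)

/-! ### Concrete constructions: bead chains and the core network `B(m)` -/

/-- Build a network from a list of arcs (as (source, target) pairs); arc
identifiers are positions in the list, so repeated pairs yield beads. -/
def mkNet (l : List (ℕ × ℕ)) : Net where
  verts := (l.map Prod.fst ++ l.map Prod.snd).toFinset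
  arcs := Finset.range l.length
  src := fun i => (l.getD i (0, 0)).1
  tgt := fun i => (l.getD i (0, 0)).2

/-- The chain `B(l)` of `l` beads with a pendant leaf: vertex `2*j` is the tree
vertex of the `(j+1)`-st bead, `2*j+1` its reticulation vertex `h_{j+1}`, there is
an arc from `h_j` to the tree vertex of the next bead, and `2*l` is the pendant
leaf `x₁` attached by the arc `(h_l, x₁)`. -/
def beadChain (l : ℕ) : Net :=
  mkNet ((List.range l).flatMap fun j => [(2*j, 2*j+1), (2*j, 2*j+1), (2*j+1, 2*j+2)])

/-- The decreasing list `(i₁, …, i_k)` of exponents of the binary representation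
of `m₁`. -/
def expList (m1 : ℕ) : List ℕ :=
  ((List.range (m1+1)).filter fun j => m1.testBit j).reverse

/-- First vertex code available for the leaves `x_2, …, x_n` in `BNet`. -/
def xBase (m1 : ℕ) : ℕ := 2 * (expList m1).headI + 2 * (expList m1).length + 10

/-- The arcs of the core network `B(m)` for the simple profile `(m₁, 1, …, 1)` on
`n` taxa: a chain of `i₁` beads with pendant leaf `x₁ = 0` (root is the vertex
`2`), one root arc subdivided by `s_k` and, for `2 ≤ j ≤ k`, an arc `(s_j, s_j')`
where `s_j'` subdivides the outgoing arc of the reticulation vertex having exactly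
`i_j` reticulation vertices strictly below it and `s_2, …, s_{k-1}` subdivide the
arc `(s_k, s_k')`; if `n ≥ 2` a caterpillar tree on the leaves `x_2, …, x_n`
(codes `xBase m₁ + i`) is attached via a subdivision vertex `w` (placed on a root
arc if `k = 1`, on `(s_k, s_k')` if `k = 2`, and on `(s_{k-1}, s_k')` if `k ≥ 3`). -/
def BArcs (m1 n : ℕ) : List (ℕ × ℕ) :=
  let E := expList m1
  let k := E.length
  let i1 := E.headI
  let hv : ℕ → ℕ := fun j => 2*j + 1
  let tv : ℕ → ℕ := fun j => 2*j
  let nxt : ℕ → ℕ := fun j => if j = i1 then 0 else 2*j + 2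
  let S' : ℕ → ℕ := fun j => 2*i1 + 2 + j
  let P : ℕ → ℕ := fun j => 2*i1 + k + 2 + j
  let w : ℕ := 2*i1 + 2*k + 4
  let L : ℕ := 2*i1 + 2*k + 10
  let x : ℕ → ℕ := fun i => L + i
  let cv : ℕ → ℕ := fun i => L + n + i
  let r : ℕ → ℕ := fun t => i1 - E.getD (t-1) 0
  let rootArcs : List (ℕ × ℕ) :=
    if 2 ≤ k then [(tv 1, hv 1), (tv 1, P k), (P k, hv 1)]
    else if 2 ≤ n then [(tv 1, hv 1), (tv 1, w), (w, hv 1)]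
    else [(tv 1, hv 1), (tv 1, hv 1)]
  let otherBeads : List (ℕ × ℕ) :=
    (List.range' 2 (i1 - 1)).flatMap fun j => [(tv j, hv j), (tv j, hv j)]
  let chainArcs : List (ℕ × ℕ) :=
    (List.range' 1 i1).flatMap fun j =>
      match (List.range' 2 (k-1)).find? (fun t => r t == j) with
      | some t => [(hv j, S' t), (S' t, nxt j)]
      | none => [(hv j, nxt j)]
  let sChain : List ℕ :=
    [P k] ++ (List.range' 2 (k-2)).map P ++ (if 2 ≤ n then [w] else []) ++ [S' k]
  let sArcs : List (ℕ × ℕ) :=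
    if 2 ≤ k then (sChain.zip sChain.tail) ++ (List.range' 2 (k-2)).map (fun j => (P j, S' j))
    else []
  let catArcs : List (ℕ × ℕ) :=
    if n ≤ 1 then []
    else if n = 2 then [(w, x 2)]
    else [(w, cv 2)] ++
      ((List.range' 2 (n-3)).flatMap fun i => [(cv i, x i), (cv i, cv (i+1))]) ++
      [(cv (n-1), x (n-1)), (cv (n-1), x n)]
  rootArcs ++ otherBeads ++ chainArcs ++ sArcs ++ catArcs

/-- The core network `B(m)` for a simple profile with first component `m1` on `n`
taxa. -/
def BNet (m1 n : ℕ) : Net := mkNet (BArcs m1 n)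

/-- The core network `B(m)` of a ploidy profile whose terminal element is `mt`,
together with its leaf indexing (leaf `0` is `x₁ = 0`, leaf `i` is `x_{i+1}`). -/
def BLNet (mt : List ℕ) : LNet where
  net := BNet mt.headI mt.length
  leaf := fun i => if i = 0 then 0 else xBase mt.headI + (i + 1)

/-- The naive realization of the simple profile `(m₁, 1, …, 1)` on `n` taxa: a
directed path `0, 1, …, n + 2m₁ - 3` (with `v_j = j - 1`, `w_i = m₁ + i - 3`,
`v_j' = n + 2m₁ - 3 - j` and `x₁ = n + 2m₁ - 3`) together with the arcs
`(v_j, v_j')` and the pendant leaf arcs `(w_i, x_i)` with `x_i = n + 2m₁ + i`. -/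
def naiveNet (m1 n : ℕ) : Net :=
  mkNet (((List.range (n + 2*m1 - 3)).map fun p => (p, p+1)) ++
    ((List.range' 1 (m1 - 1)).map fun j => (j - 1, n + 2*m1 - 3 - j)) ++
    ((List.range' 2 (n - 1)).map fun i => (m1 + i - 3, n + 2*m1 + i)))

/-! ### Cherry modification operations -/

/-- `reduce(a,b)`: delete the leaf `b` of the cherry `{a,b}` together with its
incoming arc and suppress the resulting degree-two vertex (collapsing the network
to the single vertex `a` when the common parent is the root). -/
def ReduceOp (G G' : Net) : Prop :=
  ∃ a b p ea eb, a ≠ b ∧ IsLeafN G a ∧ IsLeafN G b ∧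
    ArcFT G ea p a ∧ ArcFT G eb p b ∧ ea ≠ eb ∧
    G'.verts = (G.verts.erase b).erase p ∧
    G'.arcs = (G.arcs.erase eb).erase ea ∧
    ((IsRootN G p ∧ ∀ e ∈ G'.arcs, G'.src e = G.src e ∧ G'.tgt e = G.tgt e) ∨
     (∃ ep q, ArcFT G ep q p ∧
        (∀ e ∈ G'.arcs, e ≠ ep → G'.src e = G.src e ∧ G'.tgt e = G.tgt e) ∧
        G'.src ep = q ∧ G'.tgt ep = a))

/-- `cut(a,b)`: delete the reticulation arc of the reticulate cherry `{a,b}` with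
reticulation leaf `b`, suppressing the two resulting degree-two vertices. -/
def CutOp (G G' : Net) : Prop :=
  ∃ a b pa pb e1 e2 e3 e4 e5 q r,
    a ≠ b ∧ IsLeafN G a ∧ IsLeafN G b ∧ IsReticN G pb ∧
    ArcFT G e1 pa a ∧ ArcFT G e2 pb b ∧ ArcFT G e3 pa pb ∧
    ArcFT G e4 q pb ∧ e3 ≠ e4 ∧ ArcFT G e5 r pa ∧
    G'.verts = (G.verts.erase pa).erase pb ∧
    G'.arcs = ((G.arcs.erase e3).erase e1).erase e2 ∧
    (∀ e ∈ G'.arcs, e ≠ e4 → e ≠ e5 → G'.src e = G.src e ∧ G'.tgt e = G.tgt e) ∧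
    G'.src e5 = r ∧ G'.tgt e5 = a ∧
    G'.src e4 = q ∧ G'.tgt e4 = b

/-- `simp(a)`: for a type-1 degenerate cherry `{a}` (sole leaf whose parent is the
reticulation vertex of a bead), delete one arc of the bead, suppressing the
resulting degree-two vertex and collapsing the outgoing arc of the tree vertex of
the bead. -/
def SimpOp (G G' : Net) : Prop :=
  ∃ a h u e1 e2 e3,
    IsLeafN G a ∧ (∀ w, IsLeafN G w → w = a) ∧ IsReticN G h ∧
    ArcFT G e1 u h ∧ ArcFT G e2 u h ∧ e1 ≠ e2 ∧ ArcFT G e3 h a ∧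
    ((IsRootN G u ∧ G'.verts = {a} ∧ G'.arcs = ∅) ∨
     (∃ eu q, ArcFT G eu q u ∧
        G'.verts = (G.verts.erase h).erase u ∧
        G'.arcs = ((G.arcs.erase e2).erase e3).erase e1 ∧
        (∀ e ∈ G'.arcs, e ≠ eu → G'.src e = G.src e ∧ G'.tgt e = G.tgt e) ∧
        G'.src eu = q ∧ G'.tgt eu = a))

/-- `trim(a)`: for a type-2 degenerate cherry `{a}` (sole leaf whose parent `p` is
a reticulation vertex with distinct parents `q₁, q₂`), delete the arc `(q₁,p)`
(case (a): there is a vertex `q` with arcs `(q,q₁)`, `(q,q₂)`, `(q₁,q₂)`),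
respectively one of the two parallel arcs from `q` to `q₂` (case (b): there is an
arc `(q₁,q)` and a pair of parallel arcs from `q` to `q₂`), suppressing the two
resulting degree-two vertices. -/
def TrimOp (G G' : Net) : Prop :=
  ∃ a p g0, IsLeafN G a ∧ (∀ w, IsLeafN G w → w = a) ∧ IsReticN G p ∧ ArcFT G g0 p a ∧
   ((∃ q q1 q2 f1 f2 f3 g1 g2,
      ArcFT G g1 q1 p ∧ ArcFT G g2 q2 p ∧ g1 ≠ g2 ∧ q1 ≠ q2 ∧
      ArcFT G f1 q q1 ∧ ArcFT G f2 q q2 ∧ ArcFT G f3 q1 q2 ∧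
      G'.verts = (G.verts.erase q1).erase p ∧
      G'.arcs = ((G.arcs.erase g1).erase f3).erase g0 ∧
      (∀ e ∈ G'.arcs, e ≠ f1 → e ≠ g2 → G'.src e = G.src e ∧ G'.tgt e = G.tgt e) ∧
      G'.src f1 = q ∧ G'.tgt f1 = q2 ∧
      G'.src g2 = q2 ∧ G'.tgt g2 = a) ∨
    (∃ q q1 q2 eq' f1 f2 g1 g2,
      ArcFT G g1 q1 p ∧ ArcFT G g2 q2 p ∧ g1 ≠ g2 ∧ q1 ≠ q2 ∧
      ArcFT G eq' q1 q ∧ ArcFT G f1 q q2 ∧ ArcFT G f2 q q2 ∧ f1 ≠ f2 ∧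
      G'.verts = (G.verts.erase q).erase q2 ∧
      G'.arcs = ((G.arcs.erase f2).erase f1).erase g2 ∧
      (∀ e ∈ G'.arcs, e ≠ eq' → G'.src e = G.src e ∧ G'.tgt e = G.tgt e) ∧
      G'.src eq' = q1 ∧ G'.tgt eq' = p))

/-- A single cherry modification operation: reduce, cut or simp. -/
def CherryModOp (G G' : Net) : Prop := ReduceOp G G' ∨ CutOp G G' ∨ SimpOp G G'

/-- A single weak cherry modification operation: reduce, cut, simp or trim. -/
def WeakCherryModOp (G G' : Net) : Prop := CherryModOp G G' ∨ TrimOp G G'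

/-- The network consisting of a single vertex (and no arcs). -/
def IsSingleV (G : Net) : Prop := ∃ v, G.verts = {v} ∧ G.arcs = ∅

/-- `G` admits a complete cherry modification sequence, i.e. `G` is an orchard. -/
def IsOrchardN (G : Net) : Prop :=
  ∃ G', Relation.ReflTransGen CherryModOp G G' ∧ IsSingleV G'

/-- `G` admits a complete weak cherry modification sequence, i.e. `G` is a weak
orchard. -/
def IsWeakOrchardN (G : Net) : Prop :=
  ∃ G', Relation.ReflTransGen WeakCherryModOp G G' ∧ IsSingleV G'

/-! ### The traceback through the simplification sequence -/

/-- Traceback step in case `α = 0`: replace the leaf indexing the first component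
of `m''` by a cherry on two new leaves. -/
def CherryExpandOp (R'' R' : LNet) : Prop :=
  ∃ y1 y2 b1 b2,
    y1 ∉ R''.net.verts ∧ y2 ∉ R''.net.verts ∧ y1 ≠ y2 ∧
    b1 ∉ R''.net.arcs ∧ b2 ∉ R''.net.arcs ∧ b1 ≠ b2 ∧
    R'.net.verts = R''.net.verts ∪ {y1, y2} ∧
    R'.net.arcs = R''.net.arcs ∪ {b1, b2} ∧
    (∀ a ∈ R''.net.arcs, R'.net.src a = R''.net.src a ∧ R'.net.tgt a = R''.net.tgt a) ∧
    R'.net.src b1 = R''.leaf 0 ∧ R'.net.tgt b1 = y1 ∧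
    R'.net.src b2 = R''.leaf 0 ∧ R'.net.tgt b2 = y2 ∧
    R'.leaf 0 = y1 ∧ R'.leaf 1 = y2 ∧ (∀ i, 1 ≤ i → R'.leaf (i + 1) = R''.leaf i)

/-- Traceback step in case `α > m₂'`: subdivide the incoming arcs of the leaves
indexing the first and second components of `m''` by new vertices `u` and `v` and
add the arc `(v,u)`. -/
def AddArcOp (R'' R' : LNet) : Prop :=
  ∃ u v a0 a1 b0 b1 c,
    u ∉ R''.net.verts ∧ v ∉ R''.net.verts ∧ u ≠ v ∧
    a0 ∈ R''.net.arcs ∧ R''.net.tgt a0 = R''.leaf 0 ∧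
    a1 ∈ R''.net.arcs ∧ R''.net.tgt a1 = R''.leaf 1 ∧ a0 ≠ a1 ∧
    b0 ∉ R''.net.arcs ∧ b1 ∉ R''.net.arcs ∧ c ∉ R''.net.arcs ∧
    b0 ≠ b1 ∧ b0 ≠ c ∧ b1 ≠ c ∧
    R'.net.verts = R''.net.verts ∪ {u, v} ∧
    R'.net.arcs = R''.net.arcs ∪ {b0, b1, c} ∧
    (∀ a ∈ R''.net.arcs, a ≠ a0 → a ≠ a1 →
        R'.net.src a = R''.net.src a ∧ R'.net.tgt a = R''.net.tgt a) ∧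
    R'.net.src a0 = R''.net.src a0 ∧ R'.net.tgt a0 = u ∧
    R'.net.src a1 = R''.net.src a1 ∧ R'.net.tgt a1 = v ∧
    R'.net.src b0 = u ∧ R'.net.tgt b0 = R''.leaf 0 ∧
    R'.net.src b1 = v ∧ R'.net.tgt b1 = R''.leaf 1 ∧
    R'.net.src c = v ∧ R'.net.tgt c = u ∧
    (∀ i, R'.leaf i = R''.leaf i)

/-- Traceback step in case `0 < α ≤ m₂'`, where the inserted component `α` sits at
(0-based) position `j` of `m''`: subdivide the incoming arc of the leaf indexing
`α` by a vertex `v`, replace the leaf indexing the first component of `m''` by a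
cherry, subdivide the incoming arc of one of the two new cherry leaves by a vertex
`u`, add the arc `(v,u)` and delete the leaf indexing `α` together with its
incoming arc, suppressing the resulting degree-two vertex. -/
def InsertBackOp (j : ℕ) (R'' R' : LNet) : Prop :=
  ∃ u y1 y2 c1 c2 c3 az,
    u ∉ R''.net.verts ∧ y1 ∉ R''.net.verts ∧ y2 ∉ R''.net.verts ∧
    u ≠ y1 ∧ u ≠ y2 ∧ y1 ≠ y2 ∧
    c1 ∉ R''.net.arcs ∧ c2 ∉ R''.net.arcs ∧ c3 ∉ R''.net.arcs ∧
    c1 ≠ c2 ∧ c1 ≠ c3 ∧ c2 ≠ c3 ∧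
    az ∈ R''.net.arcs ∧ R''.net.tgt az = R''.leaf j ∧
    R'.net.verts = (R''.net.verts.erase (R''.leaf j)) ∪ {u, y1, y2} ∧
    R'.net.arcs = R''.net.arcs ∪ {c1, c2, c3} ∧
    (∀ a ∈ R''.net.arcs, a ≠ az →
        R'.net.src a = R''.net.src a ∧ R'.net.tgt a = R''.net.tgt a) ∧
    R'.net.src az = R''.net.src az ∧ R'.net.tgt az = u ∧
    R'.net.src c1 = R''.leaf 0 ∧ R'.net.tgt c1 = u ∧
    R'.net.src c2 = u ∧ R'.net.tgt c2 = y1 ∧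
    R'.net.src c3 = R''.leaf 0 ∧ R'.net.tgt c3 = y2 ∧
    R'.leaf 0 = y1 ∧ R'.leaf 1 = y2 ∧
    (∀ i, 1 ≤ i → i < j → R'.leaf (i + 1) = R''.leaf i) ∧
    (∀ i, j < i → R'.leaf i = R''.leaf i)

/-- One step of the traceback: `R'` is a realization of the non-simple profile `m'`
obtained from the realization `R''` of `simpStep m'` by the surgery dictated by the
case (`α = 0`, `α > m₂'` or `0 < α ≤ m₂'`) that produced `simpStep m'` from `m'`. -/
def TraceStep (m' : List ℕ) (R'' R' : LNet) : Prop :=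
  2 ≤ m'.length ∧ ¬ IsSimpleP m' ∧
  ((m'.headI = m'.tail.headI ∧ CherryExpandOp R'' R') ∨
   (m'.tail.headI < m'.headI - m'.tail.headI ∧ AddArcOp R'' R') ∨
   (0 < m'.headI - m'.tail.headI ∧ m'.headI - m'.tail.headI ≤ m'.tail.headI ∧
     InsertBackOp
       ((m'.tail.takeWhile fun y => decide (m'.headI - m'.tail.headI ≤ y)).length)
       R'' R'))

/-- `TracebackFrom core m N`: `N` is a network `N(m)` obtainable by the traceback
through the simplification sequence of `m`, initialized with the core network
`core`. -/
inductive TracebackFrom (core : LNet) : List ℕ → LNet → Prop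
  | base (m : List ℕ) : IsSimpleP m → TracebackFrom core m core
  | step (m' : List ℕ) (R'' R' : LNet) :
      TracebackFrom core (simpStep m') R'' → TraceStep m' R'' R' →
      TracebackFrom core m' R'

/-! ### Tree-based and tree-child networks -/

def subIn (G : Net) (A : Finset ℕ) (v : ℕ) : ℕ := (A.filter fun a => G.tgt a = v).card
def subOut (G : Net) (A : Finset ℕ) (v : ℕ) : ℕ := (A.filter fun a => G.src a = v).card

/-- `G` is tree-based: some subset `A` of its arcs forms a spanning subdivision of a
rooted phylogenetic tree (with one extra incoming arc added to its root) whose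
leaves are exactly the leaves of `G`; all remaining arcs of `G` join subdivision
vertices, and every subdivision vertex has total degree 3 in `G`. -/
def IsTreeBased (G : Net) : Prop :=
  ∃ A : Finset ℕ, A ⊆ G.arcs ∧
    (∃! r, r ∈ G.verts ∧ subIn G A r = 0) ∧
    (∀ r ∈ G.verts, subIn G A r = 0 → subOut G A r = 1) ∧
    (∀ v ∈ G.verts,
        (subIn G A v = 0 ∧ subOut G A v = 1) ∨ (subIn G A v = 1 ∧ subOut G A v = 0) ∨
        (subIn G A v = 1 ∧ subOut G A v = 1) ∨ (subIn G A v = 1 ∧ subOut G A v = 2)) ∧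
    (∀ v ∈ G.verts, subIn G A v = 1 → subOut G A v = 0 → IsLeafN G v) ∧
    (∀ v, IsLeafN G v → subIn G A v = 1 ∧ subOut G A v = 0) ∧
    (∀ a ∈ G.arcs, a ∉ A →
        subIn G A (G.src a) = 1 ∧ subOut G A (G.src a) = 1 ∧
        subIn G A (G.tgt a) = 1 ∧ subOut G A (G.tgt a) = 1) ∧
    (∀ v ∈ G.verts, subIn G A v = 1 → subOut G A v = 1 → inDeg G v + outDeg G v = 3)

/-- `G` is tree-child (reticulation vertices contained in beads being ignored):
every vertex has a directed path to a leaf on which every vertex except possibly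
the first one is either not a reticulation vertex or is contained in a bead. -/
def IsTreeChild (G : Net) : Prop :=
  ∀ v ∈ G.verts, ∃ (l : List ℕ) (w : ℕ), IsWalk G l v w ∧ IsLeafN G w ∧
    ∀ a ∈ l, IsReticN G (G.tgt a) → InBead G (G.tgt a)

/-! ### Multiple-labelled networks and the split operation -/

/-- A multiple-labelled network: a network together with a labelling map assigning
to each leaf vertex the (0-based) position of the profile component it is labelled
with; distinct leaves may carry the same label. -/
structure MLNet where
  net : Net
  lab : ℕ → ℕ

/-- A multiple-labelled tree: a multiple-labelled network without reticulation
vertices. -/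
def IsMLTree (R : MLNet) : Prop := ∀ v, ¬ IsReticN R.net v

/-- The multiple-labelled network `R` realizes the ploidy profile `m`: for every
position `i` of `m`, the total number of directed paths from the root to leaves
labelled `i` equals the `i`-th component of `m`. -/
def MLRealizes (R : MLNet) (m : List ℕ) : Prop :=
  IsPhylo R.net ∧
  (∀ v, IsLeafN R.net v → R.lab v < m.length) ∧
  (∀ i < m.length, ∀ r, IsRootN R.net r →
      (∑ v ∈ R.net.verts.filter (fun v => IsLeafN R.net v ∧ R.lab v = i),
          nPaths R.net r v) = m.getD i 0)

/-- The arcs of the subgraph induced by the vertices below `c`. -/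
def arcsBelow (G : Net) (c : ℕ) : Set ℕ :=
  {b | b ∈ G.arcs ∧ BelowV G c (G.src b) ∧ BelowV G c (G.tgt b)}

/-- `a` is a cut-arc of `G`: removing it disconnects its end vertices in the
underlying undirected graph. -/
def IsCutArc (G : Net) (a : ℕ) : Prop :=
  a ∈ G.arcs ∧
    ¬ Relation.ReflTransGen
        (fun x y => ∃ b ∈ G.arcs, b ≠ a ∧
          ((G.src b = x ∧ G.tgt b = y) ∨ (G.src b = y ∧ G.tgt b = x)))
        (G.src a) (G.tgt a)

/-- The split operation: `R'` is obtained from `R` by deleting a reticulation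
vertex `h` (with parents `p₁, p₂` and child `c`, where `(h,c)` is a cut-arc)
together with its three incident arcs, making a disjoint copy (via `φ` on vertices
and `ψ` on arcs) of the subgraph induced by the vertices below `c`, and attaching
one copy of `c` to `p₁` by an arc `(p₁,c)` and the other to `p₂` by an arc
`(p₂,c)`. -/
def SplitRel (R R' : MLNet) : Prop :=
  ∃ (h p1 p2 c a0 a1 a2 : ℕ) (φ ψ : ℕ → ℕ),
    IsReticN R.net h ∧
    ArcFT R.net a0 h c ∧ IsCutArc R.net a0 ∧
    ArcFT R.net a1 p1 h ∧ ArcFT R.net a2 p2 h ∧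
    a1 ≠ a2 ∧ a0 ≠ a1 ∧ a0 ≠ a2 ∧
    Set.InjOn φ {w | BelowV R.net c w} ∧
    (∀ w, BelowV R.net c w → φ w ∉ R.net.verts) ∧
    Set.InjOn ψ (arcsBelow R.net c) ∧
    (∀ b ∈ arcsBelow R.net c, ψ b ∉ R.net.arcs) ∧
    (↑R'.net.verts : Set ℕ) =
      ((↑R.net.verts : Set ℕ) \ {h}) ∪ (φ '' {w | BelowV R.net c w}) ∧
    (↑R'.net.arcs : Set ℕ) =
      ((↑R.net.arcs : Set ℕ) \ {a0}) ∪ (ψ '' arcsBelow R.net c) ∧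
    (∀ b ∈ R.net.arcs, b ≠ a0 → b ≠ a1 → b ≠ a2 →
        R'.net.src b = R.net.src b ∧ R'.net.tgt b = R.net.tgt b) ∧
    R'.net.src a1 = p1 ∧ R'.net.tgt a1 = c ∧
    R'.net.src a2 = p2 ∧ R'.net.tgt a2 = φ c ∧
    (∀ b ∈ arcsBelow R.net c,
        R'.net.src (ψ b) = φ (R.net.src b) ∧ R'.net.tgt (ψ b) = φ (R.net.tgt b)) ∧
    (∀ v ∈ R.net.verts, v ≠ h → R'.lab v = R.lab v) ∧
    (∀ w, BelowV R.net c w → R'.lab (φ w) = R.lab w)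

/-- Adjacency in ploidy profile space `𝒫(m)` (relative to an edit distance `D` on
multiple-labelled trees): both endpoints realize `m` and either one is obtained
from the other by a single split operation, or both are multiple-labelled trees at
`D`-distance 1. -/
def PEdge (m : List ℕ) (D : MLNet → MLNet → ℕ) (A B : MLNet) : Prop :=
  MLRealizes A m ∧ MLRealizes B m ∧
    (SplitRel A B ∨ SplitRel B A ∨ (IsMLTree A ∧ IsMLTree B ∧ D A B = 1))

/-! ### Auxiliary machinery for the proof of Statement 0 -/

section WalkLemmas

variable {G : Net}

lemma isWalk_nil_iff {u v : ℕ} : IsWalk G [] u v ↔ u = v ∧ u ∈ G.verts := Iff.rfl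

lemma isWalk_cons_iff {a : ℕ} {l : List ℕ} {u v : ℕ} :
    IsWalk G (a :: l) u v ↔ a ∈ G.arcs ∧ G.src a = u ∧ IsWalk G l (G.tgt a) v := Iff.rfl

lemma IsWalk.end_mem : ∀ {l : List ℕ} {u v : ℕ}, IsWalk G l u v → v ∈ G.verts
  | [], _, _, h => h.1 ▸ h.2
  | _ :: _, _, _, h => IsWalk.end_mem h.2.2

lemma IsWalk.start_mem (hsrc : ∀ a ∈ G.arcs, G.src a ∈ G.verts) :
    ∀ {l : List ℕ} {u v : ℕ}, IsWalk G l u v → u ∈ G.verts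
  | [], _, _, h => h.1 ▸ h.2
  | _ :: _, _, _, h => h.2.1 ▸ hsrc _ h.1

lemma IsWalk.append : ∀ {l₁ l₂ : List ℕ} {u v w : ℕ},
    IsWalk G l₁ u v → IsWalk G l₂ v w → IsWalk G (l₁ ++ l₂) u w
  | [], l₂, u, v, w, h₁, h₂ => by
      obtain ⟨rfl, -⟩ := h₁; simpa using h₂
  | a :: l₁, l₂, u, v, w, h₁, h₂ =>
      ⟨h₁.1, h₁.2.1, IsWalk.append h₁.2.2 h₂⟩

lemma isWalk_append_iff (hsrc : ∀ a ∈ G.arcs, G.src a ∈ G.verts) :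
    ∀ {l₁ l₂ : List ℕ} {u w : ℕ},
    IsWalk G (l₁ ++ l₂) u w ↔ ∃ v, IsWalk G l₁ u v ∧ IsWalk G l₂ v w := by
  intro l₁
  induction l₁ with
  | nil =>
      intro l₂ u w
      constructor
      · intro h
        exact ⟨u, ⟨rfl, h.start_mem hsrc⟩, h⟩
      · rintro ⟨v, ⟨rfl, -⟩, h⟩; exact h
  | cons a l₁ ih =>
      intro l₂ u w
      simp only [List.cons_append, isWalk_cons_iff, ih]
      constructor
      · rintro ⟨h1, h2, v, h3, h4⟩; exact ⟨v, ⟨h1, h2, h3⟩, h4⟩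
      · rintro ⟨v, ⟨h1, h2, h3⟩, h4⟩; exact ⟨h1, h2, v, h3, h4⟩

lemma IsWalk.arc_mem : ∀ {l : List ℕ} {u v : ℕ}, IsWalk G l u v → ∀ a ∈ l, a ∈ G.arcs
  | [], _, _, _, a, ha => by simp at ha
  | b :: l, _, _, h, a, ha => by
      rcases List.mem_cons.1 ha with rfl | ha
      · exact h.1
      · exact IsWalk.arc_mem h.2.2 a ha

lemma IsWalk.nodup (hsrc : ∀ a ∈ G.arcs, G.src a ∈ G.verts)
    (htgt : ∀ a ∈ G.arcs, G.tgt a ∈ G.verts)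
    (hacyc : ∀ (v : ℕ) (l : List ℕ), l ≠ [] → ¬ IsWalk G l v v) :
    ∀ {l : List ℕ} {u v : ℕ}, IsWalk G l u v → l.Nodup := by
  intro l
  induction l with
  | nil => intro u v _; exact List.nodup_nil
  | cons a l ih =>
      intro u v h
      refine List.nodup_cons.2 ⟨?_, ih h.2.2⟩
      intro hal
      obtain ⟨s, t, rfl⟩ := List.append_of_mem hal
      obtain ⟨w, hw1, hw2⟩ := (isWalk_append_iff hsrc).1 h.2.2
      have hw3 : G.src a = w := hw2.2.1
      have : IsWalk G (s ++ [a]) (G.tgt a) (G.tgt a) :=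
        hw1.append (by exact ⟨h.1, hw3.symm ▸ rfl, rfl, htgt a h.1⟩)
      exact hacyc _ _ (by simp) this

lemma walkSet_finite (hsrc : ∀ a ∈ G.arcs, G.src a ∈ G.verts)
    (htgt : ∀ a ∈ G.arcs, G.tgt a ∈ G.verts)
    (hacyc : ∀ (v : ℕ) (l : List ℕ), l ≠ [] → ¬ IsWalk G l v v) (u v : ℕ) :
    {l : List ℕ | IsWalk G l u v}.Finite := by
  classical
  have hbig : {l : List ℕ | IsWalk G l u v} ⊆
      (List.map (Subtype.val : {x // x ∈ G.arcs} → ℕ)) ''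
        {L : List {x // x ∈ G.arcs} | L.length ≤ G.arcs.card} := by
    intro l hl
    have hmem : ∀ a ∈ l, a ∈ G.arcs := hl.arc_mem
    have hnd : l.Nodup := hl.nodup hsrc htgt hacyc
    have hlen : l.length ≤ G.arcs.card := by
      have h1 : l.toFinset ⊆ G.arcs := fun a ha => hmem a (List.mem_toFinset.1 ha)
      have h2 := Finset.card_le_card h1
      rwa [List.toFinset_card_of_nodup hnd] at h2
    refine ⟨l.pmap (fun a h => (⟨a, h⟩ : {x // x ∈ G.arcs})) hmem, ?_, ?_⟩
    · simpa [Set.mem_setOf_eq, List.length_pmap] using hlen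
    · simp [List.map_pmap]
  exact Set.Finite.subset (Set.Finite.image _ (List.finite_length_le _ _)) hbig

end WalkLemmas

section ListHelpers

lemma exists_split_first {a : ℕ} : ∀ {l : List ℕ}, a ∈ l → ∃ t d, l = t ++ a :: d ∧ a ∉ t := by
  intro l
  induction l with
  | nil => intro h; simp at h
  | cons b l ih =>
      intro h
      by_cases hb : b = a
      · exact ⟨[], l, by simp [hb], by simp⟩
      · rcases List.mem_cons.1 h with rfl | h
        · exact absurd rfl hb
        · obtain ⟨t, d, rfl, hnt⟩ := ih h
          refine ⟨b :: t, d, by simp, ?_⟩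
          intro hmem
          rcases List.mem_cons.1 hmem with h' | h'
          · exact hb h'.symm
          · exact hnt h'

lemma split_first_unique {a : ℕ} : ∀ {t t' d d' : List ℕ},
    t ++ a :: d = t' ++ a :: d' → a ∉ t → a ∉ t' → t = t' ∧ d = d' := by
  intro t
  induction t with
  | nil =>
      intro t' d d' heq _ ht'
      cases t' with
      | nil => simpa using heq
      | cons b t' =>
          simp only [List.nil_append, List.cons_append, List.cons.injEq] at heq
          exact absurd (heq.1 ▸ List.mem_cons_self (a := b) (l := t')) ht'
  | cons b t ih =>
      intro t' d d' heq ht ht'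
      cases t' with
      | nil =>
          simp only [List.cons_append, List.nil_append, List.cons.injEq] at heq
          exact absurd (heq.1 ▸ List.mem_cons_self (a := b) (l := t)) ht
      | cons b' t' =>
          simp only [List.cons_append, List.cons.injEq] at heq
          obtain ⟨h1, h2⟩ := ih heq.2 (fun h => ht (List.mem_cons_of_mem _ h))
            (fun h => ht' (List.mem_cons_of_mem _ h))
          exact ⟨by rw [heq.1, h1], h2⟩

lemma takeWhile_dropWhile_split {a : ℕ} : ∀ {t : List ℕ} (d : List ℕ), a ∉ t →
    (t ++ a :: d).takeWhile (· != a) = t ∧ (t ++ a :: d).dropWhile (· != a) = a :: d := by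
  intro t
  induction t with
  | nil => intro d _; simp [List.takeWhile, List.dropWhile]
  | cons b t ih =>
      intro d hb
      have hba : b ≠ a := fun h => hb (h ▸ List.mem_cons_self (a := b) (l := t))
      have := ih d (fun h => hb (List.mem_cons_of_mem _ h))
      have hbne : (b != a) = true := bne_iff_ne.2 hba
      constructor
      · rw [List.cons_append, List.takeWhile_cons, hbne]
        simp [this.1]
      · rw [List.cons_append, List.dropWhile_cons, hbne]
        simp [this.2]

end ListHelpers

section SplitConstruction

attribute [local instance 10] Classical.propDecidable

/-- Context: a "lowest" reticulation vertex `h` with out-arc `a0`, child `c`,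
in-arcs `a1, a2`, in a phylogenetic network `G` with root `r`. -/
structure SC where
  G : Net
  hphy : IsPhylo G
  h : ℕ
  a0 : ℕ
  a1 : ℕ
  a2 : ℕ
  r : ℕ
  hh : IsReticN G h
  ha0 : a0 ∈ G.arcs
  hs0 : G.src a0 = h
  huout : ∀ e ∈ G.arcs, G.src e = h → e = a0
  ha1 : a1 ∈ G.arcs
  ha2 : a2 ∈ G.arcs
  ht1 : G.tgt a1 = h
  ht2 : G.tgt a2 = h
  hne12 : a1 ≠ a2
  huin : ∀ e ∈ G.arcs, G.tgt e = h → e = a1 ∨ e = a2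
  hnoret : ∀ w, BelowV G (G.tgt a0) w → ¬ IsReticN G w
  hroot : IsRootN G r
  hroot_uniq : ∀ x, IsRootN G x → x = r

namespace SC

variable (C : SC)

def c : ℕ := C.G.tgt C.a0
def p1 : ℕ := C.G.src C.a1
def p2 : ℕ := C.G.src C.a2
def S : Set ℕ := {w | BelowV C.G C.c w}
def NV : ℕ := C.G.verts.sup id + 1
def NA : ℕ := C.G.arcs.sup id + 1
def fv (w : ℕ) : ℕ := w + C.NV
def fa (b : ℕ) : ℕ := b + C.NA

noncomputable def belowF : Finset ℕ :=
  C.G.verts.filter (fun w => BelowV C.G C.c w)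

noncomputable def arcsBelowF : Finset ℕ :=
  C.G.arcs.filter (fun b => BelowV C.G C.c (C.G.src b) ∧ BelowV C.G C.c (C.G.tgt b))

variable {C}

lemma c_mem_verts : C.c ∈ C.G.verts := C.hphy.tgt_mem _ C.ha0
lemma p1_mem_verts : C.p1 ∈ C.G.verts := C.hphy.src_mem _ C.ha1
lemma p2_mem_verts : C.p2 ∈ C.G.verts := C.hphy.src_mem _ C.ha2
lemma h_mem_verts : C.h ∈ C.G.verts := C.hh.1

lemma c_mem_S : C.c ∈ C.S := ⟨[], rfl, c_mem_verts⟩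

lemma S_sub_verts {w : ℕ} (hw : w ∈ C.S) : w ∈ C.G.verts := by
  obtain ⟨l, hl⟩ := hw; exact hl.end_mem

lemma S_walk {w x : ℕ} (hw : w ∈ C.S) {l : List ℕ} (hl : IsWalk C.G l w x) : x ∈ C.S := by
  obtain ⟨l0, hl0⟩ := hw; exact ⟨l0 ++ l, hl0.append hl⟩

lemma h_not_S : C.h ∉ C.S := by
  rintro ⟨l, hl⟩
  exact C.hphy.acyclic C.h (C.a0 :: l) (by simp) ⟨C.ha0, C.hs0, hl⟩

lemma h_ne_c : C.h ≠ C.c := fun h => h_not_S (h ▸ c_mem_S)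

lemma mem_belowF_iff {w : ℕ} : w ∈ C.belowF ↔ w ∈ C.S := by
  unfold belowF
  rw [Finset.mem_filter]
  exact ⟨fun h => h.2, fun h => ⟨S_sub_verts h, h⟩⟩

lemma mem_arcsBelowF_iff {b : ℕ} :
    b ∈ C.arcsBelowF ↔ b ∈ C.G.arcs ∧ C.G.src b ∈ C.S ∧ C.G.tgt b ∈ C.S := by
  unfold arcsBelowF
  rw [Finset.mem_filter]
  exact Iff.rfl

lemma arc_walk {b : ℕ} (hb : b ∈ C.G.arcs) : IsWalk C.G [b] (C.G.src b) (C.G.tgt b) :=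
  ⟨hb, rfl, rfl, C.hphy.tgt_mem _ hb⟩

lemma S_closed_down {b : ℕ} (hb : b ∈ C.G.arcs) (hs : C.G.src b ∈ C.S) : C.G.tgt b ∈ C.S :=
  S_walk hs (arc_walk hb)

lemma inDeg_pos_of_arc {b v : ℕ} (hb : b ∈ C.G.arcs) (ht : C.G.tgt b = v) :
    0 < inDeg C.G v := by
  apply Finset.card_pos.2
  exact ⟨b, Finset.mem_filter.2 ⟨hb, ht⟩⟩

lemma c_not_retic : ¬ IsReticN C.G C.c := C.hnoret _ c_mem_S

lemma inDeg_S {w : ℕ} (hw : w ∈ C.S) : inDeg C.G w = 1 := by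
  have hv : w ∈ C.G.verts := S_sub_verts hw
  have hpos : 0 < inDeg C.G w := by
    by_cases hc : w = C.c
    · exact inDeg_pos_of_arc C.ha0 hc.symm
    · obtain ⟨l, hl⟩ := hw
      cases l with
      | nil => exact absurd hl.1.symm hc
      | cons a l =>
          rcases List.eq_nil_or_concat (a :: l) with h | ⟨t, e, he⟩
          · simp at h
          · rw [he, List.concat_eq_append] at hl
            obtain ⟨x, hx1, hx2⟩ := (isWalk_append_iff C.hphy.src_mem).1 hl
            exact inDeg_pos_of_arc hx2.1 hx2.2.2.1
  rcases C.hphy.types w hv with hr | hl | ht | hret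
  · have := hr.2; omega
  · exact hl.2.1
  · exact ht.2.1
  · exact absurd hret (C.hnoret _ hw)

lemma uniq_in_S {w b e : ℕ} (hw : w ∈ C.S) (hb : b ∈ C.G.arcs) (htb : C.G.tgt b = w)
    (he : e ∈ C.G.arcs) (hte : C.G.tgt e = w) : b = e := by
  have h1 : inDeg C.G w = 1 := inDeg_S hw
  have hmb : b ∈ C.G.arcs.filter (fun a => C.G.tgt a = w) := Finset.mem_filter.2 ⟨hb, htb⟩
  have hme : e ∈ C.G.arcs.filter (fun a => C.G.tgt a = w) := Finset.mem_filter.2 ⟨he, hte⟩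
  exact Finset.card_le_one.1 (le_of_eq h1) _ hmb _ hme

lemma eq_a0_of_tgt_c {b : ℕ} (hb : b ∈ C.G.arcs) (htb : C.G.tgt b = C.c) : b = C.a0 :=
  uniq_in_S c_mem_S hb htb C.ha0 rfl

lemma S_closed_up {b : ℕ} (hb : b ∈ C.G.arcs) (ht : C.G.tgt b ∈ C.S) :
    C.G.src b ∈ C.S ∨ b = C.a0 := by
  by_cases hc : C.G.tgt b = C.c
  · exact Or.inr (eq_a0_of_tgt_c hb hc)
  · left
    have ht' := ht
    obtain ⟨l, hl⟩ := ht
    cases l with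
    | nil => exact absurd hl.1.symm hc
    | cons a l =>
        rcases List.eq_nil_or_concat (a :: l) with h | ⟨t, e, he⟩
        · simp at h
        · rw [he, List.concat_eq_append] at hl
          obtain ⟨x, hx1, hx2⟩ := (isWalk_append_iff C.hphy.src_mem).1 hl
          have hbe : b = e := uniq_in_S ht' hb rfl hx2.1 hx2.2.2.1
          rw [hbe, hx2.2.1]
          exact ⟨t, hx1⟩

lemma p1_not_S : C.p1 ∉ C.S := by
  intro hp
  exact h_not_S (C.ht1 ▸ S_closed_down C.ha1 hp)

lemma p2_not_S : C.p2 ∉ C.S := by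
  intro hp
  exact h_not_S (C.ht2 ▸ S_closed_down C.ha2 hp)

lemma r_not_S : C.r ∉ C.S := by
  intro hr
  have h1 : inDeg C.G C.r = 1 := inDeg_S hr
  have h0 : inDeg C.G C.r = 0 := C.hroot.2
  omega

lemma r_ne_h : C.r ≠ C.h := by
  intro h
  have h2 : inDeg C.G C.h = 2 := C.hh.2.1
  have h0 : inDeg C.G C.r = 0 := C.hroot.2
  rw [h] at h0; omega

lemma a0_ne_a1 : C.a0 ≠ C.a1 := by
  intro h
  exact C.hphy.no_loop _ C.ha0 (by rw [C.hs0, h, C.ht1])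

lemma a0_ne_a2 : C.a0 ≠ C.a2 := by
  intro h
  exact C.hphy.no_loop _ C.ha0 (by rw [C.hs0, h, C.ht2])

lemma p1_ne_h : C.p1 ≠ C.h := fun h => C.hphy.no_loop _ C.ha1 (by rw [C.ht1]; exact h)

lemma p2_ne_h : C.p2 ≠ C.h := fun h => C.hphy.no_loop _ C.ha2 (by rw [C.ht2]; exact h)

lemma p1_ne_c : C.p1 ≠ C.c := by
  intro h
  refine C.hphy.acyclic C.c [C.a1, C.a0] (by simp) ?_
  exact ⟨C.ha1, h ▸ rfl, C.ha0, by rw [C.ht1, C.hs0], rfl, c_mem_verts⟩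

lemma p2_ne_c : C.p2 ≠ C.c := by
  intro h
  refine C.hphy.acyclic C.c [C.a2, C.a0] (by simp) ?_
  exact ⟨C.ha2, h ▸ rfl, C.ha0, by rw [C.ht2, C.hs0], rfl, c_mem_verts⟩

lemma a0_not_below : C.a0 ∉ C.arcsBelowF := by
  rw [mem_arcsBelowF_iff]
  rintro ⟨-, hs, -⟩
  exact h_not_S (C.hs0 ▸ hs)

lemma a1_not_below : C.a1 ∉ C.arcsBelowF := by
  rw [mem_arcsBelowF_iff]
  rintro ⟨-, hs, -⟩
  exact p1_not_S hs

lemma a2_not_below : C.a2 ∉ C.arcsBelowF := by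
  rw [mem_arcsBelowF_iff]
  rintro ⟨-, hs, -⟩
  exact p2_not_S hs

lemma fv_not_mem (w : ℕ) : C.fv w ∉ C.G.verts := by
  intro hmem
  have := Finset.le_sup (f := id) hmem
  simp only [id_eq] at this
  unfold fv NV at *
  omega

lemma fa_not_mem (b : ℕ) : C.fa b ∉ C.G.arcs := by
  intro hmem
  have := Finset.le_sup (f := id) hmem
  simp only [id_eq] at this
  unfold fa NA at *
  omega

lemma fv_inj : Function.Injective C.fv := fun a b h => by unfold fv at h; omega

lemma fa_inj : Function.Injective C.fa := fun a b h => by unfold fa at h; omega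

lemma fv_sub (w : ℕ) : C.fv w - C.NV = w := by unfold fv; omega

lemma fa_sub (b : ℕ) : C.fa b - C.NA = b := by unfold fa; omega

variable (C) in
/-- The network obtained by the split operation. -/
noncomputable def net' : Net where
  verts := (C.G.verts.erase C.h) ∪ C.belowF.image C.fv
  arcs := (C.G.arcs.erase C.a0) ∪ C.arcsBelowF.image C.fa
  src := fun e => if e ∈ C.arcsBelowF.image C.fa then C.fv (C.G.src (e - C.NA)) else C.G.src e
  tgt := fun e =>
    if e = C.a1 then C.c
    else if e = C.a2 then C.fv C.c
    else if e ∈ C.arcsBelowF.image C.fa then C.fv (C.G.tgt (e - C.NA)) else C.G.tgt e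

lemma not_mem_image_fa {e : ℕ} (he : e ∈ C.G.arcs) : e ∉ C.arcsBelowF.image C.fa := by
  intro hmem
  obtain ⟨b, -, hb⟩ := Finset.mem_image.1 hmem
  exact fa_not_mem b (hb ▸ he)

lemma not_mem_image_fv {v : ℕ} (hv : v ∈ C.G.verts) : v ∉ C.belowF.image C.fv := by
  intro hmem
  obtain ⟨w, -, hw⟩ := Finset.mem_image.1 hmem
  exact fv_not_mem w (hw ▸ hv)

lemma src'_old {e : ℕ} (he : e ∈ C.G.arcs) : C.net'.src e = C.G.src e := by
  unfold net'
  simp only [not_mem_image_fa he, if_false]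

lemma tgt'_old {e : ℕ} (he : e ∈ C.G.arcs) (h1 : e ≠ C.a1) (h2 : e ≠ C.a2) :
    C.net'.tgt e = C.G.tgt e := by
  unfold net'
  simp only [h1, h2, not_mem_image_fa he, if_false]

lemma tgt'_a1 : C.net'.tgt C.a1 = C.c := by unfold net'; simp

lemma tgt'_a2 : C.net'.tgt C.a2 = C.fv C.c := by
  unfold net'
  simp only [Ne.symm C.hne12, if_false, if_true, if_pos rfl]

lemma src'_a1 : C.net'.src C.a1 = C.p1 := src'_old C.ha1
lemma src'_a2 : C.net'.src C.a2 = C.p2 := src'_old C.ha2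

lemma src'_new {b : ℕ} (hb : b ∈ C.arcsBelowF) : C.net'.src (C.fa b) = C.fv (C.G.src b) := by
  unfold net'
  simp only [Finset.mem_image.2 ⟨b, hb, rfl⟩, if_true, fa_sub]

lemma fa_ne_a1 (b : ℕ) : C.fa b ≠ C.a1 := fun h => fa_not_mem b (h ▸ C.ha1)
lemma fa_ne_a2 (b : ℕ) : C.fa b ≠ C.a2 := fun h => fa_not_mem b (h ▸ C.ha2)
lemma fa_ne_a0 (b : ℕ) : C.fa b ≠ C.a0 := fun h => fa_not_mem b (h ▸ C.ha0)

lemma tgt'_new {b : ℕ} (hb : b ∈ C.arcsBelowF) : C.net'.tgt (C.fa b) = C.fv (C.G.tgt b) := by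
  unfold net'
  simp only [fa_ne_a1 b, fa_ne_a2 b, if_false, Finset.mem_image.2 ⟨b, hb, rfl⟩, if_true, fa_sub]

lemma mem_verts'_iff {x : ℕ} : x ∈ C.net'.verts ↔
    (x ∈ C.G.verts ∧ x ≠ C.h) ∨ ∃ w ∈ C.S, C.fv w = x := by
  unfold net'
  simp only [Finset.mem_union, Finset.mem_erase, Finset.mem_image, mem_belowF_iff]
  tauto

lemma mem_arcs'_iff {e : ℕ} : e ∈ C.net'.arcs ↔
    (e ∈ C.G.arcs ∧ e ≠ C.a0) ∨ ∃ b ∈ C.arcsBelowF, C.fa b = e := by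
  unfold net'
  simp only [Finset.mem_union, Finset.mem_erase, Finset.mem_image]
  tauto

lemma old_mem_verts' {x : ℕ} (hx : x ∈ C.G.verts) (hne : x ≠ C.h) : x ∈ C.net'.verts :=
  mem_verts'_iff.2 (Or.inl ⟨hx, hne⟩)

lemma new_mem_verts' {w : ℕ} (hw : w ∈ C.S) : C.fv w ∈ C.net'.verts :=
  mem_verts'_iff.2 (Or.inr ⟨w, hw, rfl⟩)

lemma old_mem_arcs' {e : ℕ} (he : e ∈ C.G.arcs) (hne : e ≠ C.a0) : e ∈ C.net'.arcs :=
  mem_arcs'_iff.2 (Or.inl ⟨he, hne⟩)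

lemma new_mem_arcs' {b : ℕ} (hb : b ∈ C.arcsBelowF) : C.fa b ∈ C.net'.arcs :=
  mem_arcs'_iff.2 (Or.inr ⟨b, hb, rfl⟩)

lemma a1_mem_arcs' : C.a1 ∈ C.net'.arcs := old_mem_arcs' C.ha1 (Ne.symm a0_ne_a1)
lemma a2_mem_arcs' : C.a2 ∈ C.net'.arcs := old_mem_arcs' C.ha2 (Ne.symm a0_ne_a2)

lemma a0_not_mem_arcs' : C.a0 ∉ C.net'.arcs := by
  rw [mem_arcs'_iff]
  rintro (⟨-, h⟩ | ⟨b, -, h⟩)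
  · exact h rfl
  · exact fa_ne_a0 b h

lemma c_mem_verts' : C.c ∈ C.net'.verts := old_mem_verts' c_mem_verts (Ne.symm h_ne_c)

lemma h_not_mem_verts' : C.h ∉ C.net'.verts := by
  rw [mem_verts'_iff]
  rintro (⟨-, h⟩ | ⟨w, -, h⟩)
  · exact h rfl
  · exact fv_not_mem w (h ▸ h_mem_verts)

lemma filter_tgt'_c : C.net'.arcs.filter (fun e => C.net'.tgt e = C.c) = {C.a1} := by
  ext e
  simp only [Finset.mem_filter, Finset.mem_singleton]
  constructor
  · rintro ⟨he, hte⟩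
    rcases mem_arcs'_iff.1 he with ⟨heG, hne0⟩ | ⟨b, hb, rfl⟩
    · by_cases h1 : e = C.a1
      · exact h1
      · by_cases h2 : e = C.a2
        · rw [h2, tgt'_a2] at hte
          exact absurd (hte ▸ fv_not_mem C.c) (fun hn => hn c_mem_verts)
        · rw [tgt'_old heG h1 h2] at hte
          exact absurd (eq_a0_of_tgt_c heG hte) hne0
    · rw [tgt'_new hb] at hte
      exact absurd (hte ▸ fv_not_mem (C.G.tgt b)) (fun hn => hn c_mem_verts)
  · rintro rfl
    exact ⟨a1_mem_arcs', tgt'_a1⟩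

lemma filter_tgt'_old {v : ℕ} (hv : v ∈ C.G.verts) (hneh : v ≠ C.h) (hnec : v ≠ C.c) :
    C.net'.arcs.filter (fun e => C.net'.tgt e = v) =
      C.G.arcs.filter (fun e => C.G.tgt e = v) := by
  ext e
  simp only [Finset.mem_filter]
  constructor
  · rintro ⟨he, hte⟩
    rcases mem_arcs'_iff.1 he with ⟨heG, hne0⟩ | ⟨b, hb, rfl⟩
    · by_cases h1 : e = C.a1
      · rw [h1, tgt'_a1] at hte; exact absurd hte.symm hnec
      · by_cases h2 : e = C.a2
        · rw [h2, tgt'_a2] at hte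
          exact absurd (hte ▸ fv_not_mem C.c) (fun hn => hn hv)
        · rw [tgt'_old heG h1 h2] at hte
          exact ⟨heG, hte⟩
    · rw [tgt'_new hb] at hte
      exact absurd (hte ▸ fv_not_mem (C.G.tgt b)) (fun hn => hn hv)
  · rintro ⟨heG, hte⟩
    have h0 : e ≠ C.a0 := fun h => hnec (by rw [← hte, h]; rfl)
    have h1 : e ≠ C.a1 := fun h => hneh (by rw [← hte, h, C.ht1])
    have h2 : e ≠ C.a2 := fun h => hneh (by rw [← hte, h, C.ht2])
    exact ⟨old_mem_arcs' heG h0, by rw [tgt'_old heG h1 h2]; exact hte⟩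

lemma filter_src'_old {v : ℕ} (hv : v ∈ C.G.verts) (hneh : v ≠ C.h) :
    C.net'.arcs.filter (fun e => C.net'.src e = v) =
      C.G.arcs.filter (fun e => C.G.src e = v) := by
  ext e
  simp only [Finset.mem_filter]
  constructor
  · rintro ⟨he, hse⟩
    rcases mem_arcs'_iff.1 he with ⟨heG, hne0⟩ | ⟨b, hb, rfl⟩
    · rw [src'_old heG] at hse
      exact ⟨heG, hse⟩
    · rw [src'_new hb] at hse
      exact absurd (hse ▸ fv_not_mem (C.G.src b)) (fun hn => hn hv)
  · rintro ⟨heG, hse⟩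
    have h0 : e ≠ C.a0 := fun h => hneh (by rw [← hse, h, C.hs0])
    exact ⟨old_mem_arcs' heG h0, by rw [src'_old heG]; exact hse⟩

lemma filter_tgt'_fvc : C.net'.arcs.filter (fun e => C.net'.tgt e = C.fv C.c) = {C.a2} := by
  ext e
  simp only [Finset.mem_filter, Finset.mem_singleton]
  constructor
  · rintro ⟨he, hte⟩
    rcases mem_arcs'_iff.1 he with ⟨heG, hne0⟩ | ⟨b, hb, rfl⟩
    · by_cases h1 : e = C.a1
      · rw [h1, tgt'_a1] at hte
        exact absurd (hte ▸ c_mem_verts) (fv_not_mem C.c)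
      · by_cases h2 : e = C.a2
        · exact h2
        · rw [tgt'_old heG h1 h2] at hte
          exact absurd (hte ▸ C.hphy.tgt_mem e heG) (fv_not_mem C.c)
    · rw [tgt'_new hb] at hte
      have : C.G.tgt b = C.c := fv_inj hte
      have hb' := (mem_arcsBelowF_iff.1 hb).1
      exact absurd (eq_a0_of_tgt_c hb' this ▸ hb) a0_not_below
  · rintro rfl
    exact ⟨a2_mem_arcs', tgt'_a2⟩

lemma filter_tgt'_fv {w : ℕ} (hw : w ∈ C.S) (hnec : w ≠ C.c) :
    C.net'.arcs.filter (fun e => C.net'.tgt e = C.fv w) =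
      (C.G.arcs.filter (fun e => C.G.tgt e = w)).image C.fa := by
  ext e
  simp only [Finset.mem_filter, Finset.mem_image]
  constructor
  · rintro ⟨he, hte⟩
    rcases mem_arcs'_iff.1 he with ⟨heG, hne0⟩ | ⟨b, hb, rfl⟩
    · by_cases h1 : e = C.a1
      · rw [h1, tgt'_a1] at hte
        exact absurd (hte ▸ c_mem_verts) (fv_not_mem w)
      · by_cases h2 : e = C.a2
        · rw [h2, tgt'_a2] at hte
          exact absurd (fv_inj hte).symm hnec
        · rw [tgt'_old heG h1 h2] at hte
          exact absurd (hte ▸ C.hphy.tgt_mem e heG) (fv_not_mem w)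
    · rw [tgt'_new hb] at hte
      exact ⟨b, ⟨(mem_arcsBelowF_iff.1 hb).1, fv_inj hte⟩, rfl⟩
  · rintro ⟨b, ⟨hbG, htb⟩, rfl⟩
    have hb0 : b ≠ C.a0 := fun h => hnec (by rw [← htb, h]; rfl)
    have hsb : C.G.src b ∈ C.S := by
      rcases S_closed_up hbG (htb ▸ hw) with h | h
      · exact h
      · exact absurd h hb0
    have hb' : b ∈ C.arcsBelowF := mem_arcsBelowF_iff.2 ⟨hbG, hsb, htb ▸ hw⟩
    exact ⟨new_mem_arcs' hb', by rw [tgt'_new hb', htb]⟩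

lemma filter_src'_fv {w : ℕ} (hw : w ∈ C.S) :
    C.net'.arcs.filter (fun e => C.net'.src e = C.fv w) =
      (C.G.arcs.filter (fun e => C.G.src e = w)).image C.fa := by
  ext e
  simp only [Finset.mem_filter, Finset.mem_image]
  constructor
  · rintro ⟨he, hse⟩
    rcases mem_arcs'_iff.1 he with ⟨heG, hne0⟩ | ⟨b, hb, rfl⟩
    · rw [src'_old heG] at hse
      exact absurd (hse ▸ C.hphy.src_mem e heG) (fv_not_mem w)
    · rw [src'_new hb] at hse
      exact ⟨b, ⟨(mem_arcsBelowF_iff.1 hb).1, fv_inj hse⟩, rfl⟩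
  · rintro ⟨b, ⟨hbG, hsb⟩, rfl⟩
    have hb' : b ∈ C.arcsBelowF :=
      mem_arcsBelowF_iff.2 ⟨hbG, hsb ▸ hw, S_closed_down hbG (hsb ▸ hw)⟩
    exact ⟨new_mem_arcs' hb', by rw [src'_new hb', hsb]⟩

lemma inDeg'_old {v : ℕ} (hv : v ∈ C.G.verts) (hneh : v ≠ C.h) :
    inDeg C.net' v = inDeg C.G v := by
  by_cases hc : v = C.c
  · subst hc
    unfold inDeg
    rw [filter_tgt'_c]
    rw [Finset.card_singleton]
    exact (inDeg_S c_mem_S).symm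
  · unfold inDeg
    rw [filter_tgt'_old hv hneh hc]

lemma outDeg'_old {v : ℕ} (hv : v ∈ C.G.verts) (hneh : v ≠ C.h) :
    outDeg C.net' v = outDeg C.G v := by
  unfold outDeg
  rw [filter_src'_old hv hneh]

lemma inDeg'_new {w : ℕ} (hw : w ∈ C.S) : inDeg C.net' (C.fv w) = inDeg C.G w := by
  by_cases hc : w = C.c
  · subst hc
    unfold inDeg
    rw [filter_tgt'_fvc, Finset.card_singleton]
    exact (inDeg_S c_mem_S).symm
  · unfold inDeg
    rw [filter_tgt'_fv hw hc, Finset.card_image_of_injective _ fa_inj]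

lemma outDeg'_new {w : ℕ} (hw : w ∈ C.S) : outDeg C.net' (C.fv w) = outDeg C.G w := by
  unfold outDeg
  rw [filter_src'_fv hw, Finset.card_image_of_injective _ fa_inj]

lemma src_ne_h_of_old {e : ℕ} (he : e ∈ C.G.arcs) (hne0 : e ≠ C.a0) : C.G.src e ≠ C.h :=
  fun h => hne0 (C.huout e he h)

lemma tgt_ne_h_of_old {e : ℕ} (he : e ∈ C.G.arcs) (h1 : e ≠ C.a1) (h2 : e ≠ C.a2) :
    C.G.tgt e ≠ C.h := fun h => by
  rcases C.huin e he h with h' | h'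
  · exact h1 h'
  · exact h2 h'

lemma src_mem' : ∀ e ∈ C.net'.arcs, C.net'.src e ∈ C.net'.verts := by
  intro e he
  rcases mem_arcs'_iff.1 he with ⟨heG, hne0⟩ | ⟨b, hb, rfl⟩
  · rw [src'_old heG]
    exact old_mem_verts' (C.hphy.src_mem e heG) (src_ne_h_of_old heG hne0)
  · rw [src'_new hb]
    exact new_mem_verts' (mem_arcsBelowF_iff.1 hb).2.1

lemma tgt_mem' : ∀ e ∈ C.net'.arcs, C.net'.tgt e ∈ C.net'.verts := by
  intro e he
  rcases mem_arcs'_iff.1 he with ⟨heG, hne0⟩ | ⟨b, hb, rfl⟩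
  · by_cases h1 : e = C.a1
    · rw [h1, tgt'_a1]; exact c_mem_verts'
    · by_cases h2 : e = C.a2
      · rw [h2, tgt'_a2]; exact new_mem_verts' c_mem_S
      · rw [tgt'_old heG h1 h2]
        exact old_mem_verts' (C.hphy.tgt_mem e heG) (tgt_ne_h_of_old heG h1 h2)
  · rw [tgt'_new hb]
    exact new_mem_verts' (mem_arcsBelowF_iff.1 hb).2.2

lemma no_loop' : ∀ e ∈ C.net'.arcs, C.net'.src e ≠ C.net'.tgt e := by
  intro e he
  rcases mem_arcs'_iff.1 he with ⟨heG, hne0⟩ | ⟨b, hb, rfl⟩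
  · by_cases h1 : e = C.a1
    · rw [h1, tgt'_a1, src'_a1]; exact p1_ne_c
    · by_cases h2 : e = C.a2
      · rw [h2, tgt'_a2, src'_a2]
        exact fun h => fv_not_mem C.c (h ▸ p2_mem_verts)
      · rw [tgt'_old heG h1 h2, src'_old heG]
        exact C.hphy.no_loop e heG
  · rw [tgt'_new hb, src'_new hb]
    intro h
    exact C.hphy.no_loop b (mem_arcsBelowF_iff.1 hb).1 (fv_inj h)

variable (C) in
noncomputable def piv (x : ℕ) : ℕ := if x ∈ C.belowF.image C.fv then x - C.NV else x

lemma piv_old {x : ℕ} (hx : x ∈ C.G.verts) : C.piv x = x := by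
  unfold piv
  rw [if_neg (not_mem_image_fv hx)]

lemma piv_new {w : ℕ} (hw : w ∈ C.S) : C.piv (C.fv w) = w := by
  unfold piv
  rw [if_pos (Finset.mem_image.2 ⟨w, mem_belowF_iff.2 hw, rfl⟩), fv_sub]

lemma piv_mem {x : ℕ} (hx : x ∈ C.net'.verts) : C.piv x ∈ C.G.verts := by
  rcases mem_verts'_iff.1 hx with ⟨hv, -⟩ | ⟨w, hw, rfl⟩
  · rw [piv_old hv]; exact hv
  · rw [piv_new hw]; exact S_sub_verts hw

lemma arc_project : ∀ e ∈ C.net'.arcs,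
    ∃ l, l ≠ [] ∧ IsWalk C.G l (C.piv (C.net'.src e)) (C.piv (C.net'.tgt e)) := by
  intro e he
  rcases mem_arcs'_iff.1 he with ⟨heG, hne0⟩ | ⟨b, hb, rfl⟩
  · by_cases h1 : e = C.a1
    · subst h1
      rw [tgt'_a1, src'_a1, piv_old p1_mem_verts, piv_old c_mem_verts]
      exact ⟨[C.a1, C.a0], by simp,
        ⟨C.ha1, rfl, C.ha0, by rw [C.hs0, C.ht1], rfl, c_mem_verts⟩⟩
    · by_cases h2 : e = C.a2
      · subst h2
        rw [tgt'_a2, src'_a2, piv_old p2_mem_verts, piv_new c_mem_S]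
        exact ⟨[C.a2, C.a0], by simp,
          ⟨C.ha2, rfl, C.ha0, by rw [C.hs0, C.ht2], rfl, c_mem_verts⟩⟩
      · rw [tgt'_old heG h1 h2, src'_old heG, piv_old (C.hphy.src_mem e heG),
          piv_old (C.hphy.tgt_mem e heG)]
        exact ⟨[e], by simp, arc_walk heG⟩
  · obtain ⟨hbG, hsb, htb⟩ := mem_arcsBelowF_iff.1 hb
    rw [tgt'_new hb, src'_new hb, piv_new hsb, piv_new htb]
    exact ⟨[b], by simp, arc_walk hbG⟩

lemma walk_project : ∀ {l : List ℕ} {u v : ℕ}, IsWalk C.net' l u v →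
    ∃ L, IsWalk C.G L (C.piv u) (C.piv v) ∧ (l ≠ [] → L ≠ []) := by
  intro l
  induction l with
  | nil =>
      rintro u v ⟨rfl, hu⟩
      exact ⟨[], ⟨rfl, piv_mem hu⟩, by simp⟩
  | cons e l ih =>
      rintro u v ⟨he, hse, hw⟩
      obtain ⟨L1, hL1ne, hL1⟩ := arc_project e he
      obtain ⟨L2, hL2, -⟩ := ih hw
      rw [hse] at hL1
      refine ⟨L1 ++ L2, hL1.append hL2, fun _ => ?_⟩
      intro hcon
      rcases List.append_eq_nil_iff.1 hcon with ⟨h1, -⟩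
      exact hL1ne h1

lemma acyclic' : ∀ (v : ℕ) (l : List ℕ), l ≠ [] → ¬ IsWalk C.net' l v v := by
  intro v l hne hw
  obtain ⟨L, hL, hLne⟩ := walk_project hw
  exact C.hphy.acyclic _ L (hLne hne) hL

lemma r_mem_verts' : C.r ∈ C.net'.verts := old_mem_verts' C.hroot.1 r_ne_h

lemma root'_r : IsRootN C.net' C.r :=
  ⟨r_mem_verts', by rw [inDeg'_old C.hroot.1 r_ne_h]; exact C.hroot.2⟩

lemma root'_uniq : ∀ x, IsRootN C.net' x → x = C.r := by
  rintro x ⟨hx, hdeg⟩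
  rcases mem_verts'_iff.1 hx with ⟨hv, hneh⟩ | ⟨w, hw, rfl⟩
  · rw [inDeg'_old hv hneh] at hdeg
    exact C.hroot_uniq x ⟨hv, hdeg⟩
  · rw [inDeg'_new hw] at hdeg
    exact absurd (inDeg_S hw) (by omega)

lemma phylo' : IsPhylo C.net' := by
  refine ⟨src_mem', tgt_mem', no_loop', acyclic', ⟨C.r, root'_r, fun x hx => root'_uniq x hx⟩,
    ?_, ?_⟩
  · intro x hx
    rw [root'_uniq x hx]
    rw [outDeg'_old C.hroot.1 r_ne_h]
    exact C.hphy.root_out C.r C.hroot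
  · intro v hv
    rcases mem_verts'_iff.1 hv with ⟨hvG, hneh⟩ | ⟨w, hw, rfl⟩
    · rcases C.hphy.types v hvG with h | h | h | h
      · exact Or.inl ⟨hv, by rw [inDeg'_old hvG hneh]; exact h.2⟩
      · exact Or.inr (Or.inl ⟨hv, by rw [inDeg'_old hvG hneh]; exact h.2.1,
          by rw [outDeg'_old hvG hneh]; exact h.2.2⟩)
      · exact Or.inr (Or.inr (Or.inl ⟨hv, by rw [inDeg'_old hvG hneh]; exact h.2.1,
          by rw [outDeg'_old hvG hneh]; exact h.2.2⟩))
      · exact Or.inr (Or.inr (Or.inr ⟨hv, by rw [inDeg'_old hvG hneh]; exact h.2.1,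
          by rw [outDeg'_old hvG hneh]; exact h.2.2⟩))
    · rcases C.hphy.types w (S_sub_verts hw) with h | h | h | h
      · exact Or.inl ⟨hv, by rw [inDeg'_new hw]; exact h.2⟩
      · exact Or.inr (Or.inl ⟨hv, by rw [inDeg'_new hw]; exact h.2.1,
          by rw [outDeg'_new hw]; exact h.2.2⟩)
      · exact Or.inr (Or.inr (Or.inl ⟨hv, by rw [inDeg'_new hw]; exact h.2.1,
          by rw [outDeg'_new hw]; exact h.2.2⟩))
      · exact Or.inr (Or.inr (Or.inr ⟨hv, by rw [inDeg'_new hw]; exact h.2.1,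
          by rw [outDeg'_new hw]; exact h.2.2⟩))

lemma leaf'_old_iff {v : ℕ} (hv : v ∈ C.G.verts) (hneh : v ≠ C.h) :
    IsLeafN C.net' v ↔ IsLeafN C.G v := by
  unfold IsLeafN
  rw [inDeg'_old hv hneh, outDeg'_old hv hneh]
  exact ⟨fun h => ⟨hv, h.2⟩, fun h => ⟨old_mem_verts' hv hneh, h.2⟩⟩

lemma leaf'_new_iff {w : ℕ} (hw : w ∈ C.S) :
    IsLeafN C.net' (C.fv w) ↔ IsLeafN C.G w := by
  unfold IsLeafN
  rw [inDeg'_new hw, outDeg'_new hw]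
  exact ⟨fun h => ⟨S_sub_verts hw, h.2⟩, fun h => ⟨new_mem_verts' hw, h.2⟩⟩

lemma retic'_old_iff {v : ℕ} (hv : v ∈ C.G.verts) (hneh : v ≠ C.h) :
    IsReticN C.net' v ↔ IsReticN C.G v := by
  unfold IsReticN
  rw [inDeg'_old hv hneh, outDeg'_old hv hneh]
  exact ⟨fun h => ⟨hv, h.2⟩, fun h => ⟨old_mem_verts' hv hneh, h.2⟩⟩

lemma retic'_new_not {w : ℕ} (hw : w ∈ C.S) : ¬ IsReticN C.net' (C.fv w) := by
  rintro ⟨-, hdeg, -⟩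
  rw [inDeg'_new hw] at hdeg
  have := inDeg_S hw
  omega

lemma walk_from_h {l : List ℕ} {v : ℕ} (hw : IsWalk C.G l C.h v) : v = C.h ∨ v ∈ C.S := by
  cases l with
  | nil => exact Or.inl hw.1.symm
  | cons b l =>
      obtain ⟨hb, hsb, hw'⟩ := hw
      rw [C.huout b hb hsb] at hw'
      exact Or.inr (S_walk c_mem_S hw')

lemma src_not_S {b : ℕ} (hb : b ∈ C.G.arcs) (h0 : b = C.a0 ∨ b = C.a1 ∨ b = C.a2) :
    C.G.src b ∉ C.S := by
  rcases h0 with rfl | rfl | rfl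
  · rw [C.hs0]; exact h_not_S
  · exact p1_not_S
  · exact p2_not_S

lemma walk_S_G' : ∀ {l : List ℕ} {w v : ℕ}, w ∈ C.S → IsWalk C.G l w v →
    IsWalk C.net' l w v := by
  intro l
  induction l with
  | nil =>
      rintro w v hwS ⟨rfl, hmem⟩
      exact ⟨rfl, old_mem_verts' hmem (fun h => h_not_S (h ▸ hwS))⟩
  | cons b l ih =>
      rintro w v hwS ⟨hb, hsb, hw⟩
      have hb0 : b ≠ C.a0 ∧ b ≠ C.a1 ∧ b ≠ C.a2 := by
        refine ⟨?_, ?_, ?_⟩ <;> rintro rfl <;>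
          exact src_not_S hb (by tauto) (hsb ▸ hwS)
      refine ⟨old_mem_arcs' hb hb0.1, by rw [src'_old hb]; exact hsb, ?_⟩
      rw [tgt'_old hb hb0.2.1 hb0.2.2]
      exact ih (S_closed_down hb (hsb ▸ hwS)) hw

lemma walk_G'_S : ∀ {l : List ℕ} {w v : ℕ}, w ∈ C.S → IsWalk C.net' l w v →
    IsWalk C.G l w v := by
  intro l
  induction l with
  | nil =>
      rintro w v hwS ⟨rfl, hmem⟩
      exact ⟨rfl, S_sub_verts hwS⟩
  | cons e l ih =>
      rintro w v hwS ⟨he, hse, hw⟩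
      rcases mem_arcs'_iff.1 he with ⟨heG, hne0⟩ | ⟨b, hb, rfl⟩
      · rw [src'_old heG] at hse
        have h1 : e ≠ C.a1 := by rintro rfl; exact p1_not_S (hse ▸ hwS)
        have h2 : e ≠ C.a2 := by rintro rfl; exact p2_not_S (hse ▸ hwS)
        rw [tgt'_old heG h1 h2] at hw
        exact ⟨heG, hse, ih (S_closed_down heG (hse ▸ hwS)) hw⟩
      · rw [src'_new hb] at hse
        exact absurd (hse ▸ S_sub_verts hwS) (fv_not_mem _)

lemma walk_S_end {l : List ℕ} {w v : ℕ} (hwS : w ∈ C.S) (hw : IsWalk C.net' l w v) :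
    v ∈ C.S := S_walk hwS (walk_G'_S hwS hw)

lemma walk_map_fa : ∀ {l : List ℕ} {w v : ℕ}, w ∈ C.S → IsWalk C.G l w v →
    IsWalk C.net' (l.map C.fa) (C.fv w) (C.fv v) := by
  intro l
  induction l with
  | nil =>
      rintro w v hwS ⟨rfl, hmem⟩
      exact ⟨rfl, new_mem_verts' hwS⟩
  | cons b l ih =>
      rintro w v hwS ⟨hb, hsb, hw⟩
      have hbB : b ∈ C.arcsBelowF :=
        mem_arcsBelowF_iff.2 ⟨hb, hsb ▸ hwS, S_closed_down hb (hsb ▸ hwS)⟩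
      refine ⟨new_mem_arcs' hbB, by rw [src'_new hbB, hsb], ?_⟩
      rw [tgt'_new hbB]
      exact ih (S_closed_down hb (hsb ▸ hwS)) hw

lemma walk_unmap_fa : ∀ {l : List ℕ} {w : ℕ} {x : ℕ}, w ∈ C.S →
    IsWalk C.net' l (C.fv w) x →
    ∃ l0 v, l = l0.map C.fa ∧ v ∈ C.S ∧ x = C.fv v ∧ IsWalk C.G l0 w v := by
  intro l
  induction l with
  | nil =>
      rintro w x hwS ⟨rfl, -⟩
      exact ⟨[], w, rfl, hwS, rfl, rfl, S_sub_verts hwS⟩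
  | cons e l ih =>
      rintro w x hwS ⟨he, hse, hw⟩
      rcases mem_arcs'_iff.1 he with ⟨heG, hne0⟩ | ⟨b, hb, rfl⟩
      · rw [src'_old heG] at hse
        exact absurd (hse ▸ C.hphy.src_mem e heG) (fv_not_mem w)
      · obtain ⟨hbG, hsbS, htbS⟩ := mem_arcsBelowF_iff.1 hb
        rw [src'_new hb] at hse
        have hsb : C.G.src b = w := fv_inj hse
        rw [tgt'_new hb] at hw
        obtain ⟨l0, v, rfl, hvS, rfl, hw0⟩ := ih htbS hw
        exact ⟨b :: l0, v, rfl, hvS, rfl, hbG, hsb, hw0⟩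

lemma walk_iff_outside : ∀ {l : List ℕ} {u v : ℕ}, u ∈ C.G.verts → u ∉ C.S → u ≠ C.h →
    v ∈ C.G.verts → v ∉ C.S → v ≠ C.h →
    (IsWalk C.G l u v ↔ IsWalk C.net' l u v) := by
  intro l
  induction l with
  | nil =>
      intro u v hu huS huh hv hvS hvh
      constructor
      · rintro ⟨rfl, -⟩; exact ⟨rfl, old_mem_verts' hu huh⟩
      · rintro ⟨rfl, -⟩; exact ⟨rfl, hu⟩
  | cons e l ih =>
      intro u v hu huS huh hv hvS hvh
      constructor
      · rintro ⟨he, hse, hw⟩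
        have h0 : e ≠ C.a0 := by rintro rfl; exact huh (by rw [← hse, C.hs0])
        have h12 : e ≠ C.a1 ∧ e ≠ C.a2 := by
          constructor <;> rintro rfl
          · rcases walk_from_h (C.ht1 ▸ hw) with h | h
            · exact hvh h
            · exact hvS h
          · rcases walk_from_h (C.ht2 ▸ hw) with h | h
            · exact hvh h
            · exact hvS h
        have htS : C.G.tgt e ∉ C.S := by
          intro hS
          rcases S_closed_up he hS with h | h
          · exact huS (hse ▸ h)
          · exact h0 h
        refine ⟨old_mem_arcs' he h0, by rw [src'_old he]; exact hse, ?_⟩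
        rw [tgt'_old he h12.1 h12.2]
        exact (ih (C.hphy.tgt_mem e he) htS (tgt_ne_h_of_old he h12.1 h12.2)
          hv hvS hvh).1 hw
      · rintro ⟨he, hse, hw⟩
        rcases mem_arcs'_iff.1 he with ⟨heG, hne0⟩ | ⟨b, hb, rfl⟩
        · rw [src'_old heG] at hse
          by_cases h1 : e = C.a1
          · subst h1
            rw [tgt'_a1] at hw
            exact absurd (walk_S_end c_mem_S hw) hvS
          · by_cases h2 : e = C.a2
            · subst h2
              rw [tgt'_a2] at hw
              obtain ⟨l0, v', -, -, rfl, -⟩ := walk_unmap_fa c_mem_S hw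
              exact absurd hv (fv_not_mem v')
            · rw [tgt'_old heG h1 h2] at hw
              have htS : C.G.tgt e ∉ C.S := by
                intro hS
                rcases S_closed_up heG hS with h | h
                · exact huS (hse ▸ h)
                · exact hne0 h
              refine ⟨heG, hse, ?_⟩
              exact (ih (C.hphy.tgt_mem e heG) htS (tgt_ne_h_of_old heG h1 h2)
                hv hvS hvh).2 hw
        · rw [src'_new hb] at hse
          exact absurd (hse ▸ hu) (fv_not_mem _)

lemma a0_mem_walk : ∀ {l : List ℕ} {u v : ℕ}, u ∉ C.S → v ∈ C.S → IsWalk C.G l u v →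
    C.a0 ∈ l := by
  intro l
  induction l with
  | nil => rintro u v huS hvS ⟨rfl, -⟩; exact absurd hvS huS
  | cons b l ih =>
      rintro u v huS hvS ⟨hb, hsb, hw⟩
      by_cases h0 : b = C.a0
      · rw [h0]; exact List.mem_cons_self
      · refine List.mem_cons_of_mem _ (ih ?_ hvS hw)
        intro hS
        rcases S_closed_up hb hS with h | h
        · exact huS (hsb ▸ h)
        · exact h0 h

lemma a1_mem_walk' : ∀ {l : List ℕ} {u v : ℕ}, u ∉ C.S → v ∈ C.S →
    IsWalk C.net' l u v → C.a1 ∈ l := by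
  intro l
  induction l with
  | nil => rintro u v huS hvS ⟨rfl, -⟩; exact absurd hvS huS
  | cons e l ih =>
      rintro u v huS hvS ⟨he, hse, hw⟩
      by_cases h1 : e = C.a1
      · rw [h1]; exact List.mem_cons_self
      · refine List.mem_cons_of_mem _ (ih ?_ hvS hw)
        rcases mem_arcs'_iff.1 he with ⟨heG, hne0⟩ | ⟨b, hb, rfl⟩
        · by_cases h2 : e = C.a2
          · rw [h2, tgt'_a2]
            exact fun hS => fv_not_mem C.c (S_sub_verts hS)
          · rw [tgt'_old heG h1 h2]
            intro hS
            rcases S_closed_up heG hS with h | h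
            · exact huS (hse ▸ (src'_old heG ▸ h))
            · exact hne0 h
        · rw [tgt'_new hb]
          exact fun hS => fv_not_mem _ (S_sub_verts hS)

lemma a2_mem_walk' : ∀ {l : List ℕ} {u x : ℕ}, u ∈ C.G.verts → x ∉ C.G.verts →
    IsWalk C.net' l u x → C.a2 ∈ l := by
  intro l
  induction l with
  | nil => rintro u x hu hx ⟨rfl, -⟩; exact absurd hu hx
  | cons e l ih =>
      rintro u x hu hx ⟨he, hse, hw⟩
      by_cases h2 : e = C.a2
      · rw [h2]; exact List.mem_cons_self
      · refine List.mem_cons_of_mem _ (ih ?_ hx hw)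
        rcases mem_arcs'_iff.1 he with ⟨heG, hne0⟩ | ⟨b, hb, rfl⟩
        · by_cases h1 : e = C.a1
          · rw [h1, tgt'_a1]; exact c_mem_verts
          · rw [tgt'_old heG h1 h2]; exact C.hphy.tgt_mem e heG
        · rw [src'_new hb] at hse
          exact absurd (hse ▸ hu) (fv_not_mem _)

variable (C) in
def f1 : List ℕ → List ℕ := fun l =>
  l.takeWhile (· != C.a1) ++ C.a1 :: C.a0 :: (l.dropWhile (· != C.a1)).tail

variable (C) in
def f2 : List ℕ → List ℕ := fun l =>
  l.takeWhile (· != C.a2) ++ C.a2 :: C.a0 :: ((l.dropWhile (· != C.a2)).tail.map (· - C.NA))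

lemma f1_eval {t d : List ℕ} (ht : C.a1 ∉ t) :
    C.f1 (t ++ C.a1 :: d) = t ++ C.a1 :: C.a0 :: d := by
  obtain ⟨h1, h2⟩ := takeWhile_dropWhile_split (a := C.a1) d ht
  unfold f1
  rw [h1, h2]
  rfl

lemma map_unfa_map_fa (d : List ℕ) : (d.map C.fa).map (· - C.NA) = d := by
  rw [List.map_map]
  have : ∀ b ∈ d, ((· - C.NA) ∘ C.fa) b = id b := fun b _ => fa_sub b
  rw [List.map_congr_left this, List.map_id]

lemma f2_eval {t d : List ℕ} (ht : C.a2 ∉ t) :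
    C.f2 (t ++ C.a2 :: d.map C.fa) = t ++ C.a2 :: C.a0 :: d := by
  obtain ⟨h1, h2⟩ := takeWhile_dropWhile_split (a := C.a2) (d.map C.fa) ht
  unfold f2
  rw [h1, h2]
  simp only [List.tail_cons, map_unfa_map_fa]

lemma W1_decomp {l : List ℕ} {v : ℕ} (hvS : v ∈ C.S) (hl : IsWalk C.net' l C.r v) :
    ∃ t d, l = t ++ C.a1 :: d ∧ C.a1 ∉ t ∧ C.a0 ∉ t ∧
      IsWalk C.G t C.r C.p1 ∧ IsWalk C.G d C.c v := by
  have ha1l : C.a1 ∈ l := a1_mem_walk' r_not_S hvS hl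
  obtain ⟨t, d, rfl, htna1⟩ := exists_split_first ha1l
  obtain ⟨x, hx1, hx2⟩ := (isWalk_append_iff src_mem').1 hl
  obtain ⟨-, hsx, hwd⟩ := hx2
  rw [src'_a1] at hsx
  subst hsx
  rw [tgt'_a1] at hwd
  have ha0t : C.a0 ∉ t := fun hmem => a0_not_mem_arcs' (hx1.arc_mem _ hmem)
  refine ⟨t, d, rfl, htna1, ha0t, ?_, walk_G'_S c_mem_S hwd⟩
  exact (walk_iff_outside C.hroot.1 r_not_S r_ne_h p1_mem_verts p1_not_S p1_ne_h).2 hx1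

lemma W2_decomp {l : List ℕ} {v : ℕ} (hvS : v ∈ C.S) (hl : IsWalk C.net' l C.r (C.fv v)) :
    ∃ t d, l = t ++ C.a2 :: d.map C.fa ∧ C.a2 ∉ t ∧ C.a0 ∉ t ∧
      IsWalk C.G t C.r C.p2 ∧ IsWalk C.G d C.c v := by
  have ha2l : C.a2 ∈ l := a2_mem_walk' C.hroot.1 (fv_not_mem v) hl
  obtain ⟨t, d, rfl, htna2⟩ := exists_split_first ha2l
  obtain ⟨x, hx1, hx2⟩ := (isWalk_append_iff src_mem').1 hl
  obtain ⟨-, hsx, hwd⟩ := hx2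
  rw [src'_a2] at hsx
  subst hsx
  rw [tgt'_a2] at hwd
  obtain ⟨d0, v', rfl, hv'S, hfvv, hwd0⟩ := walk_unmap_fa c_mem_S hwd
  have hv' : v' = v := fv_inj hfvv.symm
  subst hv'
  have ha0t : C.a0 ∉ t := fun hmem => a0_not_mem_arcs' (hx1.arc_mem _ hmem)
  refine ⟨t, d0, rfl, htna2, ha0t, ?_, hwd0⟩
  exact (walk_iff_outside C.hroot.1 r_not_S r_ne_h p2_mem_verts p2_not_S p2_ne_h).2 hx1

lemma W_decomp {l : List ℕ} {v : ℕ} (hvS : v ∈ C.S) (hl : IsWalk C.G l C.r v) :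
    ∃ t0 e d, l = t0 ++ e :: C.a0 :: d ∧ (e = C.a1 ∨ e = C.a2) ∧
      C.a0 ∉ t0 ∧ C.a1 ∉ t0 ∧ C.a2 ∉ t0 ∧
      IsWalk C.G t0 C.r (C.G.src e) ∧ IsWalk C.G d C.c v := by
  have ha0l : C.a0 ∈ l := a0_mem_walk r_not_S hvS hl
  obtain ⟨t, d, rfl, htna0⟩ := exists_split_first ha0l
  obtain ⟨x, hx1, hx2⟩ := (isWalk_append_iff C.hphy.src_mem).1 hl
  obtain ⟨-, hsx, hwd⟩ := hx2
  rw [C.hs0] at hsx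
  subst hsx
  rcases List.eq_nil_or_concat t with rfl | ⟨t0, e, rfl⟩
  · exact absurd hx1.1 r_ne_h
  · rw [List.concat_eq_append] at hx1 htna0 ⊢
    obtain ⟨y, hy1, hy2⟩ := (isWalk_append_iff C.hphy.src_mem).1 hx1
    obtain ⟨heG, hsy, hty, -⟩ := hy2
    subst hsy
    have he12 : e = C.a1 ∨ e = C.a2 := C.huin e heG hty
    have hnomem : C.a1 ∉ t0 ∧ C.a2 ∉ t0 := by
      constructor <;> intro hmem <;>
      · obtain ⟨s, s', rfl⟩ := List.append_of_mem hmem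
        obtain ⟨z, hz1, hz2⟩ := (isWalk_append_iff C.hphy.src_mem).1 hy1
        obtain ⟨hj, hsj, hwj⟩ := hz2
        have hcyc : IsWalk C.G (s' ++ [e]) C.h C.h := by
          refine IsWalk.append ?_ ⟨heG, rfl, hty, hty ▸ h_mem_verts⟩
          first
            | (rw [C.ht1] at hwj; exact hwj)
            | (rw [C.ht2] at hwj; exact hwj)
        exact C.hphy.acyclic C.h _ (by simp) hcyc
    have ha0t0 : C.a0 ∉ t0 := fun hm => htna0 (List.mem_append_left _ hm)
    refine ⟨t0, e, d, by simp, he12, ha0t0, hnomem.1, hnomem.2, hy1, ?_⟩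
    exact hwd

lemma W_split {v : ℕ} (hvS : v ∈ C.S) :
    {l : List ℕ | IsWalk C.G l C.r v} =
      C.f1 '' {l : List ℕ | IsWalk C.net' l C.r v} ∪
      C.f2 '' {l : List ℕ | IsWalk C.net' l C.r (C.fv v)} := by
  apply Set.eq_of_subset_of_subset
  · intro l hl
    obtain ⟨t0, e, d, rfl, he12, h0, h1, h2, hwt, hwd⟩ := W_decomp hvS hl
    rcases he12 with rfl | rfl
    · left
      refine ⟨t0 ++ C.a1 :: d, ?_, f1_eval h1⟩
      have hwt' : IsWalk C.net' t0 C.r C.p1 :=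
        (walk_iff_outside C.hroot.1 r_not_S r_ne_h p1_mem_verts p1_not_S p1_ne_h).1 hwt
      exact hwt'.append ⟨a1_mem_arcs', src'_a1, tgt'_a1 ▸ walk_S_G' c_mem_S hwd⟩
    · right
      refine ⟨t0 ++ C.a2 :: d.map C.fa, ?_, f2_eval h2⟩
      have hwt' : IsWalk C.net' t0 C.r C.p2 :=
        (walk_iff_outside C.hroot.1 r_not_S r_ne_h p2_mem_verts p2_not_S p2_ne_h).1 hwt
      exact hwt'.append ⟨a2_mem_arcs', src'_a2, tgt'_a2 ▸ walk_map_fa c_mem_S hwd⟩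
  · rintro l (⟨l1, hl1, rfl⟩ | ⟨l2, hl2, rfl⟩)
    · obtain ⟨t, d, rfl, h1, h0, hwt, hwd⟩ := W1_decomp hvS hl1
      rw [f1_eval h1]
      exact hwt.append ⟨C.ha1, rfl, C.ha0, by rw [C.hs0, C.ht1], hwd⟩
    · obtain ⟨t, d, rfl, h2, h0, hwt, hwd⟩ := W2_decomp hvS hl2
      rw [f2_eval h2]
      exact hwt.append ⟨C.ha2, rfl, C.ha0, by rw [C.hs0, C.ht2], hwd⟩

lemma nPaths_split {v : ℕ} (hvS : v ∈ C.S) :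
    nPaths C.G C.r v = nPaths C.net' C.r v + nPaths C.net' C.r (C.fv v) := by
  have hfin1 : {l : List ℕ | IsWalk C.net' l C.r v}.Finite :=
    walkSet_finite src_mem' tgt_mem' acyclic' _ _
  have hfin2 : {l : List ℕ | IsWalk C.net' l C.r (C.fv v)}.Finite :=
    walkSet_finite src_mem' tgt_mem' acyclic' _ _
  have hinj1 : Set.InjOn C.f1 {l : List ℕ | IsWalk C.net' l C.r v} := by
    intro l hl l' hl' heq
    obtain ⟨t, d, rfl, h1, -, -, -⟩ := W1_decomp hvS hl
    obtain ⟨t', d', rfl, h1', -, -, -⟩ := W1_decomp hvS hl'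
    rw [f1_eval h1, f1_eval h1'] at heq
    obtain ⟨rfl, heq2⟩ := split_first_unique heq h1 h1'
    simp only [List.cons.injEq] at heq2
    rw [heq2.2]
  have hinj2 : Set.InjOn C.f2 {l : List ℕ | IsWalk C.net' l C.r (C.fv v)} := by
    intro l hl l' hl' heq
    obtain ⟨t, d, rfl, h2, -, -, -⟩ := W2_decomp hvS hl
    obtain ⟨t', d', rfl, h2', -, -, -⟩ := W2_decomp hvS hl'
    rw [f2_eval h2, f2_eval h2'] at heq
    obtain ⟨rfl, heq2⟩ := split_first_unique heq h2 h2'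
    simp only [List.cons.injEq] at heq2
    rw [heq2.2]
  have hdisj : Disjoint (C.f1 '' {l : List ℕ | IsWalk C.net' l C.r v})
      (C.f2 '' {l : List ℕ | IsWalk C.net' l C.r (C.fv v)}) := by
    rw [Set.disjoint_left]
    rintro x ⟨l1, hl1, rfl⟩ ⟨l2, hl2, heq⟩
    obtain ⟨t, d, rfl, h1, h0, -, -⟩ := W1_decomp hvS hl1
    obtain ⟨t', d', rfl, h2, h0', -, -⟩ := W2_decomp hvS hl2
    rw [f1_eval h1, f2_eval h2] at heq
    have heq' : (t' ++ [C.a2]) ++ C.a0 :: d' = (t ++ [C.a1]) ++ C.a0 :: d := by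
      simpa using heq
    have h0'' : C.a0 ∉ t' ++ [C.a2] := by
      simp only [List.mem_append, List.mem_singleton]
      rintro (h | h)
      · exact h0' h
      · exact a0_ne_a2 h
    have h0''' : C.a0 ∉ t ++ [C.a1] := by
      simp only [List.mem_append, List.mem_singleton]
      rintro (h | h)
      · exact h0 h
      · exact a0_ne_a1 h
    obtain ⟨hteq, -⟩ := split_first_unique heq' h0'' h0'''
    have := (List.append_inj' hteq rfl).2
    simp only [List.cons.injEq] at this
    exact C.hne12 this.1.symm
  unfold nPaths
  rw [W_split hvS, Set.ncard_union_eq hdisj (hfin1.image _) (hfin2.image _),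
    Set.ncard_image_of_injOn hinj1, Set.ncard_image_of_injOn hinj2]

lemma nPaths_outside {v : ℕ} (hv : v ∈ C.G.verts) (hvS : v ∉ C.S) (hvh : v ≠ C.h) :
    nPaths C.net' C.r v = nPaths C.G C.r v := by
  unfold nPaths
  congr 1
  ext l
  exact (walk_iff_outside C.hroot.1 r_not_S r_ne_h hv hvS hvh).symm

lemma cutarc : IsCutArc C.G C.a0 := by
  refine ⟨C.ha0, fun hrel => ?_⟩
  have key : ∀ x, Relation.ReflTransGen
      (fun x y => ∃ b ∈ C.G.arcs, b ≠ C.a0 ∧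
        ((C.G.src b = x ∧ C.G.tgt b = y) ∨ (C.G.src b = y ∧ C.G.tgt b = x)))
      (C.G.src C.a0) x → x ∉ C.S := by
    intro x hx
    induction hx with
    | refl => rw [C.hs0]; exact h_not_S
    | tail h1 h2 ih =>
        obtain ⟨b, hb, hbne, hcase⟩ := h2
        rcases hcase with ⟨hs, ht⟩ | ⟨hs, ht⟩
        · intro hS
          rcases S_closed_up hb (ht ▸ hS) with hc | hc
          · exact ih (hs ▸ hc)
          · exact hbne hc
        · intro hS
          exact ih (ht ▸ S_closed_down hb (hs ▸ hS))
  exact key _ hrel c_mem_S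

lemma coe_verts' : (↑C.net'.verts : Set ℕ) =
    ((↑C.G.verts : Set ℕ) \ {C.h}) ∪ (C.fv '' C.S) := by
  ext x
  rw [Finset.mem_coe, mem_verts'_iff]
  simp only [Set.mem_union, Set.mem_diff, Set.mem_singleton_iff, Set.mem_image,
    Finset.mem_coe]

lemma mem_arcsBelow_set_iff {b : ℕ} : b ∈ arcsBelow C.G C.c ↔ b ∈ C.arcsBelowF := by
  rw [mem_arcsBelowF_iff]
  exact Iff.rfl

lemma coe_arcs' : (↑C.net'.arcs : Set ℕ) =
    ((↑C.G.arcs : Set ℕ) \ {C.a0}) ∪ (C.fa '' arcsBelow C.G C.c) := by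
  ext e
  rw [Finset.mem_coe, mem_arcs'_iff]
  simp only [Set.mem_union, Set.mem_diff, Set.mem_singleton_iff, Set.mem_image,
    Finset.mem_coe]
  constructor
  · rintro (⟨h1, h2⟩ | ⟨b, hb, hfb⟩)
    · exact Or.inl ⟨h1, h2⟩
    · exact Or.inr ⟨b, mem_arcsBelow_set_iff.2 hb, hfb⟩
  · rintro (⟨h1, h2⟩ | ⟨b, hb, hfb⟩)
    · exact Or.inl ⟨h1, h2⟩
    · exact Or.inr ⟨b, mem_arcsBelow_set_iff.1 hb, hfb⟩

variable (C) in
lemma splitRel (lab : ℕ → ℕ) :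
    SplitRel ⟨C.G, lab⟩ ⟨C.net', fun x => lab (C.piv x)⟩ := by
  refine ⟨C.h, C.p1, C.p2, C.c, C.a0, C.a1, C.a2, C.fv, C.fa, C.hh,
    ⟨C.ha0, C.hs0, rfl⟩, cutarc, ⟨C.ha1, rfl, C.ht1⟩, ⟨C.ha2, rfl, C.ht2⟩,
    C.hne12, a0_ne_a1, a0_ne_a2, fv_inj.injOn, fun w _ => fv_not_mem w,
    fa_inj.injOn, fun b _ => fa_not_mem b, coe_verts', coe_arcs',
    ?_, src'_a1, tgt'_a1, src'_a2, tgt'_a2, ?_, ?_, ?_⟩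
  · intro b hb h0 h1 h2
    exact ⟨src'_old hb, tgt'_old hb h1 h2⟩
  · intro b hb
    have hb' := mem_arcsBelow_set_iff.1 hb
    exact ⟨src'_new hb', tgt'_new hb'⟩
  · intro v hv hvh
    show lab (C.piv v) = lab v
    rw [piv_old hv]
  · intro w hw
    show lab (C.piv (C.fv w)) = lab w
    rw [piv_new hw]

lemma leaf_ne_h {v : ℕ} (hleaf : IsLeafN C.G v) : v ≠ C.h := by
  rintro rfl
  have h1 := hleaf.2.2
  have h2 := C.hh.2.2
  omega

variable (C) in
lemma realizes' (lab : ℕ → ℕ) (m : List ℕ) (hR : MLRealizes ⟨C.G, lab⟩ m) :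
    MLRealizes ⟨C.net', fun x => lab (C.piv x)⟩ m := by
  obtain ⟨hphyR, hlab, hcount⟩ := hR
  refine ⟨phylo', ?_, ?_⟩
  · intro v hv
    have hv' : v ∈ C.net'.verts := hv.1
    rcases mem_verts'_iff.1 hv' with ⟨h1, h2⟩ | ⟨w, hw, rfl⟩
    · show lab (C.piv v) < m.length
      rw [piv_old h1]
      exact hlab v ((leaf'_old_iff h1 h2).1 hv)
    · show lab (C.piv (C.fv w)) < m.length
      rw [piv_new hw]
      exact hlab w ((leaf'_new_iff hw).1 hv)
  · intro i hi r' hr'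
    have hr'' : r' = C.r := root'_uniq r' hr'
    subst hr''
    show (∑ v ∈ C.net'.verts.filter (fun v => IsLeafN C.net' v ∧ lab (C.piv v) = i),
      nPaths C.net' C.r v) = m.getD i 0
    set Lf := C.G.verts.filter (fun v => IsLeafN C.G v ∧ lab v = i) with hLf
    set B := Lf.filter (fun v => v ∈ C.belowF) with hB
    have hsplit : C.net'.verts.filter (fun v => IsLeafN C.net' v ∧ lab (C.piv v) = i)
        = Lf ∪ B.image C.fv := by
      ext v
      rw [Finset.mem_filter, Finset.mem_union, Finset.mem_image]
      constructor
      · rintro ⟨hv, hleaf, hlabv⟩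
        rcases mem_verts'_iff.1 hv with ⟨h1, h2⟩ | ⟨w, hw, rfl⟩
        · left
          refine Finset.mem_filter.2 ⟨h1, (leaf'_old_iff h1 h2).1 hleaf, ?_⟩
          rw [piv_old h1] at hlabv; exact hlabv
        · right
          refine ⟨w, Finset.mem_filter.2 ⟨Finset.mem_filter.2
            ⟨S_sub_verts hw, (leaf'_new_iff hw).1 hleaf, ?_⟩, mem_belowF_iff.2 hw⟩, rfl⟩
          rw [piv_new hw] at hlabv; exact hlabv
      · rintro (hv | ⟨w, hw, rfl⟩)
        · obtain ⟨h1, hleaf, hlabv⟩ := Finset.mem_filter.1 hv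
          have h2 : v ≠ C.h := leaf_ne_h hleaf
          exact ⟨old_mem_verts' h1 h2, (leaf'_old_iff h1 h2).2 hleaf,
            by rw [piv_old h1]; exact hlabv⟩
        · obtain ⟨hwLf, hwB⟩ := Finset.mem_filter.1 hw
          obtain ⟨h1, hleaf, hlabv⟩ := Finset.mem_filter.1 hwLf
          have hwS := mem_belowF_iff.1 hwB
          exact ⟨new_mem_verts' hwS, (leaf'_new_iff hwS).2 hleaf,
            by rw [piv_new hwS]; exact hlabv⟩
    have hdisj : Disjoint Lf (B.image C.fv) := by
      rw [Finset.disjoint_left]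
      intro x hxL hxI
      obtain ⟨w, -, rfl⟩ := Finset.mem_image.1 hxI
      exact fv_not_mem w (Finset.mem_filter.1 hxL).1
    rw [hsplit, Finset.sum_union hdisj,
      Finset.sum_image (fun x _ y _ h => fv_inj h)]
    have hsum2 : (∑ w ∈ B, nPaths C.net' C.r (C.fv w)) =
        ∑ v ∈ Lf, (if v ∈ C.belowF then nPaths C.net' C.r (C.fv v) else 0) := by
      rw [hB, Finset.sum_filter]
    rw [hsum2, ← Finset.sum_add_distrib]
    have hpt : ∀ v ∈ Lf, (nPaths C.net' C.r v +
        if v ∈ C.belowF then nPaths C.net' C.r (C.fv v) else 0) = nPaths C.G C.r v := by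
      intro v hvLf
      obtain ⟨h1, hleaf, -⟩ := Finset.mem_filter.1 hvLf
      by_cases hvB : v ∈ C.belowF
      · rw [if_pos hvB]
        exact (nPaths_split (mem_belowF_iff.1 hvB)).symm
      · rw [if_neg hvB, add_zero]
        exact nPaths_outside h1 (fun hS => hvB (mem_belowF_iff.2 hS)) (leaf_ne_h hleaf)
    rw [Finset.sum_congr rfl hpt]
    exact hcount i hi C.r C.hroot

end SC

noncomputable def nRetic (G : Net) : ℕ := (G.verts.filter (fun v => IsReticN G v)).card

lemma SC.nRetic_lt (C : SC) : nRetic C.net' < nRetic C.G := by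
  have hmemh : C.h ∈ C.G.verts.filter (fun v => IsReticN C.G v) :=
    Finset.mem_filter.2 ⟨SC.h_mem_verts, C.hh⟩
  have hset : C.net'.verts.filter (fun v => IsReticN C.net' v)
      = (C.G.verts.filter (fun v => IsReticN C.G v)).erase C.h := by
    ext v
    rw [Finset.mem_filter, Finset.mem_erase, Finset.mem_filter]
    constructor
    · rintro ⟨hv, hret⟩
      rcases SC.mem_verts'_iff.1 hv with ⟨h1, h2⟩ | ⟨w, hw, rfl⟩
      · exact ⟨h2, h1, (SC.retic'_old_iff h1 h2).1 hret⟩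
      · exact absurd hret (SC.retic'_new_not hw)
    · rintro ⟨h2, h1, hret⟩
      exact ⟨SC.old_mem_verts' h1 h2, (SC.retic'_old_iff h1 h2).2 hret⟩
  unfold nRetic
  rw [hset, Finset.card_erase_of_mem hmemh]
  have hpos : 0 < (C.G.verts.filter (fun v => IsReticN C.G v)).card :=
    Finset.card_pos.2 ⟨C.h, hmemh⟩
  omega

lemma split_step (m : List ℕ) (R : MLNet) (hR : MLRealizes R m) (hnt : ¬ IsMLTree R) :
    ∃ R' : MLNet, MLRealizes R' m ∧ SplitRel R R' ∧ nRetic R'.net < nRetic R.net := by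
  have hphy : IsPhylo R.net := hR.1
  simp only [IsMLTree, not_forall, not_not] at hnt
  obtain ⟨v0, hv0⟩ := hnt
  set f : ℕ → ℕ := fun w => (R.net.verts.filter (fun x => BelowV R.net w x)).card with hf
  have hTne : (R.net.verts.filter (fun v => IsReticN R.net v)).Nonempty :=
    ⟨v0, Finset.mem_filter.2 ⟨hv0.1, hv0⟩⟩
  obtain ⟨h, hhT, hmin⟩ := Finset.exists_min_image _ f hTne
  have hh : IsReticN R.net h := (Finset.mem_filter.1 hhT).2
  obtain ⟨a0, ha0eq⟩ := Finset.card_eq_one.1 hh.2.2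
  have ha0f : a0 ∈ R.net.arcs.filter (fun e => R.net.src e = h) := by
    rw [ha0eq]; exact Finset.mem_singleton_self a0
  have ha0 : a0 ∈ R.net.arcs := (Finset.mem_filter.1 ha0f).1
  have hs0 : R.net.src a0 = h := (Finset.mem_filter.1 ha0f).2
  have huout : ∀ e ∈ R.net.arcs, R.net.src e = h → e = a0 := by
    intro e he hse
    have : e ∈ R.net.arcs.filter (fun e => R.net.src e = h) := Finset.mem_filter.2 ⟨he, hse⟩
    rw [ha0eq] at this
    exact Finset.mem_singleton.1 this
  obtain ⟨a1, a2, hne12, heq2⟩ := Finset.card_eq_two.1 hh.2.1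
  have ha1f : a1 ∈ R.net.arcs.filter (fun e => R.net.tgt e = h) := by
    rw [heq2]; exact Finset.mem_insert_self a1 {a2}
  have ha2f : a2 ∈ R.net.arcs.filter (fun e => R.net.tgt e = h) := by
    rw [heq2]; exact Finset.mem_insert_of_mem (Finset.mem_singleton_self a2)
  have ha1 : a1 ∈ R.net.arcs := (Finset.mem_filter.1 ha1f).1
  have ha2 : a2 ∈ R.net.arcs := (Finset.mem_filter.1 ha2f).1
  have ht1 : R.net.tgt a1 = h := (Finset.mem_filter.1 ha1f).2
  have ht2 : R.net.tgt a2 = h := (Finset.mem_filter.1 ha2f).2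
  have huin : ∀ e ∈ R.net.arcs, R.net.tgt e = h → e = a1 ∨ e = a2 := by
    intro e he hte
    have : e ∈ R.net.arcs.filter (fun e => R.net.tgt e = h) := Finset.mem_filter.2 ⟨he, hte⟩
    rw [heq2] at this
    rcases Finset.mem_insert.1 this with h' | h'
    · exact Or.inl h'
    · exact Or.inr (Finset.mem_singleton.1 h')
  obtain ⟨r, hroot, huniq⟩ := hphy.root_exu
  have hbelow_lt : ∀ w, IsReticN R.net w → BelowV R.net h w → w ≠ h → False := by
    intro w hw hbw hwh
    have hsub : R.net.verts.filter (fun x => BelowV R.net w x) ⊂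
        R.net.verts.filter (fun x => BelowV R.net h x) := by
      constructor
      · intro x hx
        obtain ⟨hxv, l2, hl2⟩ := Finset.mem_filter.1 hx
        obtain ⟨l1, hl1⟩ := hbw
        exact Finset.mem_filter.2 ⟨hxv, l1 ++ l2, hl1.append hl2⟩
      · intro hsub'
        have hmemh : h ∈ R.net.verts.filter (fun x => BelowV R.net h x) :=
          Finset.mem_filter.2 ⟨hh.1, [], rfl, hh.1⟩
        obtain ⟨-, l2, hl2⟩ := Finset.mem_filter.1 (hsub' hmemh)
        obtain ⟨l1, hl1⟩ := hbw
        have hl1ne : l1 ≠ [] := by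
          rintro rfl
          exact hwh hl1.1.symm
        refine hphy.acyclic h (l1 ++ l2) ?_ (hl1.append hl2)
        intro hcon
        exact hl1ne (List.append_eq_nil_iff.1 hcon).1
    have hlt : f w < f h := Finset.card_lt_card hsub
    have hge : f h ≤ f w := hmin w (Finset.mem_filter.2 ⟨hw.1, hw⟩)
    omega
  have hnoret : ∀ w, BelowV R.net (R.net.tgt a0) w → ¬ IsReticN R.net w := by
    intro w hbw hw
    obtain ⟨l, hl⟩ := hbw
    have hbw' : BelowV R.net h w := ⟨a0 :: l, ha0, hs0, hl⟩
    have hwh : w ≠ h := by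
      rintro rfl
      exact hphy.acyclic _ (a0 :: l) (by simp) ⟨ha0, hs0, hl⟩
    exact hbelow_lt w hw hbw' hwh
  let C : SC := ⟨R.net, hphy, h, a0, a1, a2, r, hh, ha0, hs0, huout, ha1, ha2,
    ht1, ht2, hne12, huin, hnoret, hroot, fun x hx => huniq x hx⟩
  refine ⟨⟨C.net', fun x => R.lab (C.piv x)⟩, ?_, ?_, ?_⟩
  · exact C.realizes' R.lab m hR
  · exact C.splitRel R.lab
  · exact C.nRetic_lt

lemma nRetic_zero_tree {R : MLNet} (hz : nRetic R.net = 0) : IsMLTree R := by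
  intro v hv
  have hmem : v ∈ R.net.verts.filter (fun v => IsReticN R.net v) :=
    Finset.mem_filter.2 ⟨hv.1, hv⟩
  unfold nRetic at hz
  rw [Finset.card_eq_zero] at hz
  rw [hz] at hmem
  exact absurd hmem (Finset.notMem_empty v)

lemma toTree (m : List ℕ) : ∀ (n : ℕ) (R : MLNet), nRetic R.net ≤ n → MLRealizes R m →
    ∃ T, MLRealizes T m ∧ IsMLTree T ∧
      Relation.ReflTransGen
        (fun A B => MLRealizes A m ∧ MLRealizes B m ∧ SplitRel A B) R T := by
  intro n
  induction n with
  | zero =>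
      intro R hle hR
      exact ⟨R, hR, nRetic_zero_tree (Nat.le_zero.1 hle), Relation.ReflTransGen.refl⟩
  | succ n ih =>
      intro R hle hR
      by_cases htree : IsMLTree R
      · exact ⟨R, hR, htree, Relation.ReflTransGen.refl⟩
      · obtain ⟨R', hR', hsplit, hlt⟩ := split_step m R hR htree
        obtain ⟨T, h1, h2, h3⟩ := ih R' (by omega) hR'
        exact ⟨T, h1, h2, Relation.ReflTransGen.head ⟨hR, hR', hsplit⟩ h3⟩

end SplitConstruction


/-- For any ploidy profile `m` and any edit distance `D` on the
set of multiple-labelled trees realizing `m` whose associated tree space (trees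
realizing `m`, edges = `D`-distance 1) is connected, ploidy profile space
`𝒫(m)` is connected. -/
theorem ploidy_profile_space_connected (m : List ℕ) (hm : IsProfileL m)
    (D : MLNet → MLNet → ℕ)
    (htree_conn : ∀ T T' : MLNet, MLRealizes T m → IsMLTree T →
      MLRealizes T' m → IsMLTree T' →
      Relation.ReflTransGen
        (fun A B => MLRealizes A m ∧ IsMLTree A ∧ MLRealizes B m ∧ IsMLTree B ∧
          D A B = 1) T T') :
    ∀ N N' : MLNet, MLRealizes N m → MLRealizes N' m →
      Relation.ReflTransGen (PEdge m D) N N' := by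
  intro N N' hN hN'
  obtain ⟨T, hTm, hTt, hchain⟩ := toTree m (nRetic N.net) N le_rfl hN
  obtain ⟨T', hTm', hTt', hchain'⟩ := toTree m (nRetic N'.net) N' le_rfl hN'
  have lift1 : Relation.ReflTransGen (PEdge m D) N T :=
    Relation.ReflTransGen.mono (fun A B hAB => ⟨hAB.1, hAB.2.1, Or.inl hAB.2.2⟩) N T hchain
  have rev : ∀ {A B : MLNet}, Relation.ReflTransGen
      (fun A B => MLRealizes A m ∧ MLRealizes B m ∧ SplitRel A B) A B →
      Relation.ReflTransGen (PEdge m D) B A := by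
    intro A B hAB
    induction hAB with
    | refl => exact Relation.ReflTransGen.refl
    | tail h1 h2 ih =>
        exact Relation.ReflTransGen.head ⟨h2.2.1, h2.1, Or.inr (Or.inl h2.2.2)⟩ ih
  have lift2 : Relation.ReflTransGen (PEdge m D) T' N' := rev hchain'
  have lift3 : Relation.ReflTransGen (PEdge m D) T T' :=
    Relation.ReflTransGen.mono
      (fun A B hAB => ⟨hAB.1, hAB.2.2.1, Or.inr (Or.inr ⟨hAB.2.1, hAB.2.2.2.1, hAB.2.2.2.2⟩)⟩) T T' (htree_conn T T' hTm hTt hTm' hTt')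
  exact (lift1.trans lift3).trans lift2

end Ploidy
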